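/- arXiv:1311.4852 — 3 statements merged into one kernel-verified Lean document; each statement's English description precedes it below -/
import Mathlib

section
/- For every k ≥ 1, every 2k-edge-connected finite simple graph contains k pairwise edge-disjoint spanning trees. -/
open SimpleGraph

/-- `G` contains `k` pairwise edge-disjoint spanning trees: spanning subgraphs that are
connected and acyclic, with pairwise disjoint edge sets. -/
def HasEdgeDisjointSpanningTrees {V : Type*} (G : SimpleGraph V) (k : ℕ) : Prop :=
  ∃ T : Fin k → SimpleGraph V,
    (∀ i, T i ≤ G ∧ (T i).IsTree) ∧
    Pairwise fun i j => Disjoint (T i).edgeSet (T j).edgeSet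

/-- `G` is `m`-edge-connected: `G` is connected and remains connected after the removal
of any fewer than `m` edges. -/
def IsEdgeConnected {V : Type*} (G : SimpleGraph V) (m : ℕ) : Prop :=
  G.Connected ∧ ∀ S : Finset (Sym2 V), ↑S ⊆ G.edgeSet → S.card < m →
    (G.deleteEdges ↑S).Connected

namespace NWaux

variable {V : Type*}

/-- Reachability within a vertex set `U`. -/
def ReachIn (H : SimpleGraph V) (U : Set V) (u v : V) : Prop :=
  ∃ w : H.Walk u v, ∀ z ∈ w.support, z ∈ U

lemma ReachIn.refl {H : SimpleGraph V} {U : Set V} {u : V} (hu : u ∈ U) :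
    ReachIn H U u u := ⟨.nil, by simp [hu]⟩

lemma ReachIn.symm {H : SimpleGraph V} {U : Set V} {u v : V} (h : ReachIn H U u v) :
    ReachIn H U v u := by
  obtain ⟨w, hw⟩ := h
  exact ⟨w.reverse, by simpa [SimpleGraph.Walk.support_reverse] using hw⟩

lemma ReachIn.trans {H : SimpleGraph V} {U : Set V} {u v x : V} (h : ReachIn H U u v)
    (h' : ReachIn H U v x) : ReachIn H U u x := by
  obtain ⟨w, hw⟩ := h
  obtain ⟨w', hw'⟩ := h'
  refine ⟨w.append w', fun z hz => ?_⟩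
  rw [SimpleGraph.Walk.mem_support_append_iff] at hz
  exact hz.elim (hw z) (hw' z)

lemma ReachIn.of_adj {H : SimpleGraph V} {U : Set V} {u v : V} (h : H.Adj u v)
    (hu : u ∈ U) (hv : v ∈ U) : ReachIn H U u v :=
  ⟨.cons h .nil, by simp [hu, hv]⟩

lemma ReachIn.reachable {H : SimpleGraph V} {U : Set V} {u v : V} (h : ReachIn H U u v) :
    H.Reachable u v := ⟨h.choose⟩

lemma ReachIn.mem_left {H : SimpleGraph V} {U : Set V} {u v : V} (h : ReachIn H U u v) :
    u ∈ U := h.choose_spec u h.choose.start_mem_support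

lemma ReachIn.mono {H H' : SimpleGraph V} {U U' : Set V} (hH : H ≤ H') (hU : U ⊆ U')
    {u v : V} (h : ReachIn H U u v) : ReachIn H' U' u v := by
  obtain ⟨w, hw⟩ := h
  refine ⟨w.mapLe hH, fun z hz => hU (hw z ?_)⟩
  simpa [SimpleGraph.Walk.mapLe, SimpleGraph.Walk.support_map] using hz

/-- Vertex sets closed under adjacency trap walks. -/
lemma walk_fix {H : SimpleGraph V} {A : Set V}
    (hA : ∀ ⦃a b : V⦄, H.Adj a b → a ∈ A → b ∈ A) :
    ∀ {u v : V}, (w : H.Walk u v) → u ∈ A → ∀ z ∈ w.support, z ∈ A := by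
  intro u v w
  induction w with
  | nil => intro hu z hz; simp at hz; exact hz ▸ hu
  | cons h q ih =>
    intro hu z hz
    rw [SimpleGraph.Walk.support_cons, List.mem_cons] at hz
    rcases hz with rfl | hz
    · exact hu
    · exact ih (hA h hu) z hz

/-- Patch a walk in `H'` into `ReachIn H U`, provided each edge of `H'` with ends
in `U` can be patched. -/
lemma reachIn_patch {H H' : SimpleGraph V} {U : Set V}
    (hpatch : ∀ ⦃a b : V⦄, H'.Adj a b → a ∈ U → b ∈ U → ReachIn H U a b) :
    ∀ {u v : V}, (w : H'.Walk u v) → (∀ z ∈ w.support, z ∈ U) → ReachIn H U u v := by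
  intro u v w
  induction w with
  | nil => intro hs; exact ReachIn.refl (hs _ (by simp))
  | @cons a b c h q ih =>
    intro hs
    have hu : a ∈ U := hs _ (SimpleGraph.Walk.start_mem_support _)
    have hz : b ∈ U := by
      refine hs _ ?_
      rw [SimpleGraph.Walk.support_cons]
      exact List.mem_cons_of_mem _ q.start_mem_support
    refine (hpatch h hu hz).trans (ih ?_)
    intro z hz'
    refine hs _ ?_
    rw [SimpleGraph.Walk.support_cons]
    exact List.mem_cons_of_mem _ hz'

lemma reachable_patch {H H' : SimpleGraph V}
    (hpatch : ∀ ⦃a b : V⦄, H'.Adj a b → H.Reachable a b) {u v : V}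
    (h : H'.Reachable u v) : H.Reachable u v := by
  obtain ⟨w⟩ := h
  induction w with
  | nil => exact Reachable.refl _
  | cons hadj q ih => exact (hpatch hadj).trans ih

lemma reachIn_induce_aux {H : SimpleGraph V} {Q : Set V} :
    ∀ {u v : V}, (w : H.Walk u v) → (∀ z ∈ w.support, z ∈ Q) → ∀ (hu : u ∈ Q) (hv : v ∈ Q),
      (H.induce Q).Reachable ⟨u, hu⟩ ⟨v, hv⟩ := by
  intro u v w
  induction w with
  | nil => intro _ hu hv; exact Reachable.refl _
  | @cons a b c hadj q ih =>
    intro hw hu hv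
    have hb : b ∈ Q := hw b (by simp)
    have hadj' : (H.induce Q).Adj ⟨a, hu⟩ ⟨b, hb⟩ := by
      simp only [comap_adj, Function.Embedding.coe_subtype]
      exact hadj
    refine hadj'.reachable.trans (ih ?_ hb hv)
    intro z hz
    exact hw z (by rw [SimpleGraph.Walk.support_cons]; exact List.mem_cons_of_mem _ hz)

lemma reachIn_induce {H : SimpleGraph V} {U Q : Set V} {u v : V} (h : ReachIn H U u v)
    (hsub : U ⊆ Q) (hu : u ∈ Q) (hv : v ∈ Q) :
    (H.induce Q).Reachable ⟨u, hu⟩ ⟨v, hv⟩ := by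
  obtain ⟨w, hw⟩ := h
  exact reachIn_induce_aux w (fun z hz => hsub (hw z hz)) hu hv




/-- Adding an edge between two vertices that are not reachable preserves acyclicity. -/
lemma isAcyclic_sup_edge {H : SimpleGraph V} (hH : H.IsAcyclic) {x y : V} (hxy : x ≠ y)
    (hr : ¬H.Reachable x y) : (H ⊔ fromEdgeSet {s(x, y)}).IsAcyclic := by
  set H' := H ⊔ fromEdgeSet {s(x, y)} with hH'
  have hle : H' \ fromEdgeSet {s(x, y)} ≤ H := by
    intro a b hab
    rcases hab with ⟨hab1 | hab1, hab2⟩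
    · exact hab1
    · exact absurd hab1 hab2
  have hbridge : H'.IsBridge s(x, y) := by
    rw [isBridge_iff]
    refine fun hre => hr ?_
    exact hre.mono hle
  intro v c hc
  by_cases he : s(x, y) ∈ c.edges
  · exact hbridge.notMem_edges_of_isCycle hc he
  · have hsub : ∀ e ∈ c.edges, e ∈ H.edgeSet := by
      intro e hee
      have := c.edges_subset_edgeSet hee
      rw [hH', edgeSet_sup] at this
      rcases this with h1 | h1
      · exact h1
      · rw [edgeSet_fromEdgeSet] at h1
        exact absurd h1.1 (by rintro rfl; exact he hee)
    exact hH (c.transfer H hsub) (hc.transfer hsub)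

/-- Splitting a path at an edge. -/
lemma path_split {H : SimpleGraph V} {a b : V} :
    ∀ {x y : V} (p : H.Walk x y), p.IsPath → s(a, b) ∈ p.edges →
      ((H.deleteEdges {s(a, b)}).Reachable x a ∧ (H.deleteEdges {s(a, b)}).Reachable b y) ∨
      ((H.deleteEdges {s(a, b)}).Reachable x b ∧ (H.deleteEdges {s(a, b)}).Reachable a y) := by
  intro x y p
  induction p with
  | nil => intro _ he; simp at he
  | @cons u z w hadj q ih =>
    intro hp he
    rw [SimpleGraph.Walk.edges_cons, List.mem_cons] at he
    rcases he with he | he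
    · -- the split edge is the first edge
      have hq : ∀ e ∈ q.edges, e ∉ ({s(a, b)} : Set (Sym2 V)) := by
        intro e hee
        simp only [Set.mem_singleton_iff]
        rintro rfl
        have := hp.edges_nodup
        rw [SimpleGraph.Walk.edges_cons, List.nodup_cons] at this
        exact this.1 (he ▸ hee)
      have hqr : (H.deleteEdges {s(a, b)}).Reachable z w := ⟨q.toDeleteEdges _ hq⟩
      rcases Sym2.eq_iff.mp he.symm with ⟨rfl, rfl⟩ | ⟨rfl, rfl⟩
      · exact Or.inl ⟨Reachable.refl _, hqr⟩
      · exact Or.inr ⟨Reachable.refl _, hqr⟩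
    · -- the split edge is inside the tail
      have hne : s(u, z) ≠ s(a, b) := by
        intro hh
        have := hp.edges_nodup
        rw [SimpleGraph.Walk.edges_cons, List.nodup_cons] at this
        exact this.1 (hh ▸ he)
      have hadj' : (H.deleteEdges {s(a, b)}).Adj u z := by
        rw [deleteEdges_adj]
        exact ⟨hadj, by simpa using hne⟩
      rcases ih hp.of_cons he with ⟨h1, h2⟩ | ⟨h1, h2⟩
      · exact Or.inl ⟨hadj'.reachable.trans h1, h2⟩
      · exact Or.inr ⟨hadj'.reachable.trans h1, h2⟩

/-- In an acyclic graph, removing an edge of a path disconnects its endpoints. -/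
lemma not_reachable_of_path_edge {H : SimpleGraph V} (hH : H.IsAcyclic) {x y a b : V}
    (p : H.Walk x y) (hp : p.IsPath) (he : s(a, b) ∈ p.edges) :
    ¬(H.deleteEdges {s(a, b)}).Reachable x y := by
  intro hr
  have hab : H.Adj a b := p.adj_of_mem_edges he
  have hbridge := (isAcyclic_iff_forall_adj_isBridge.mp hH) hab
  have hnr : ¬(H.deleteEdges {s(a, b)}).Reachable a b := isBridge_iff.mp hbridge
  rcases path_split p hp he with ⟨h1, h2⟩ | ⟨h1, h2⟩
  · exact hnr (h1.symm.trans (hr.trans h2.symm))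
  · exact hnr (h2.trans (hr.symm.trans h1))


/-- A connected graph on a finite vertex type has at least `card - 1` edges. -/
lemma conn_card_le {W : Type*} [Fintype W] {H : SimpleGraph W} (h : H.Connected) :
    Fintype.card W ≤ H.edgeSet.ncard + 1 := by
  classical
  have : Nonempty {T : SimpleGraph W // T ≤ H ∧ T.Connected} := ⟨⟨H, le_refl _, h⟩⟩
  obtain ⟨T₀, hmin⟩ := Finite.exists_min
    (fun T : {T : SimpleGraph W // T ≤ H ∧ T.Connected} => T.1.edgeSet.ncard)
  have hacyc : T₀.1.IsAcyclic := by
    by_contra hcyc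
    rw [SimpleGraph.IsAcyclic] at hcyc
    push_neg at hcyc
    obtain ⟨v, c, hc⟩ := hcyc
    have hlen : c.edges ≠ [] := by
      have h3 := hc.three_le_length
      intro hnil
      rw [← SimpleGraph.Walk.length_edges, hnil] at h3
      simp at h3
    obtain ⟨e, he⟩ := List.exists_mem_of_ne_nil _ hlen
    induction e using Sym2.ind with
    | _ a b =>
    have hmem : s(a, b) ∈ T₀.1.edgeSet := c.edges_subset_edgeSet he
    have hnb : ¬T₀.1.IsBridge s(a, b) := fun hb =>
      hb.notMem_edges_of_isCycle hc he
    have hreach : (T₀.1.deleteEdges {s(a, b)}).Reachable a b := by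
      rw [isBridge_iff] at hnb
      push_neg at hnb
      exact hnb
    have hconn' : (T₀.1.deleteEdges {s(a, b)}).Connected := by
      rw [connected_iff]
      refine ⟨fun u w => ?_, h.nonempty⟩
      refine reachable_patch ?_ (T₀.2.2.preconnected u w)
      intro a' b' hab
      by_cases heq : s(a', b') = s(a, b)
      · rcases Sym2.eq_iff.mp heq with ⟨rfl, rfl⟩ | ⟨rfl, rfl⟩
        · exact hreach
        · exact hreach.symm
      · exact Adj.reachable (by rw [deleteEdges_adj]; exact ⟨hab, by simpa using heq⟩)
    have hle : (T₀.1.deleteEdges {s(a, b)}) ≤ H := le_trans (deleteEdges_le _) T₀.2.1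
    have := hmin ⟨_, hle, hconn'⟩
    simp only at this
    have hcount : (T₀.1.deleteEdges {s(a, b)}).edgeSet.ncard + 1 = T₀.1.edgeSet.ncard := by
      rw [edgeSet_deleteEdges]
      exact Set.ncard_diff_singleton_add_one hmem (Set.toFinite _)
    omega
  have htree : T₀.1.IsTree := ⟨T₀.2.2, hacyc⟩
  have hcard := htree.card_edgeFinset
  have h1 : T₀.1.edgeFinset.card = T₀.1.edgeSet.ncard := by
    exact (Set.ncard_coe_finset _).symm.trans (by rw [coe_edgeFinset])
  have h2 : T₀.1.edgeSet.ncard ≤ H.edgeSet.ncard :=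
    Set.ncard_le_ncard (edgeSet_mono T₀.2.1) (Set.toFinite _)
  omega

/-- An acyclic graph on a finite nonempty vertex type has at most `card - 1` edges. -/
lemma acyclic_card_le {W : Type*} [Fintype W] [Nonempty W] {H : SimpleGraph W}
    (h : H.IsAcyclic) : H.edgeSet.ncard + 1 ≤ Fintype.card W := by
  classical
  have : Nonempty {T : SimpleGraph W // H ≤ T ∧ T.IsAcyclic} := ⟨⟨H, le_refl _, h⟩⟩
  obtain ⟨T₀, hmax⟩ := Finite.exists_max
    (fun T : {T : SimpleGraph W // H ≤ T ∧ T.IsAcyclic} => T.1.edgeSet.ncard)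
  have hconn : T₀.1.Connected := by
    by_contra hnc
    have hpre : ¬T₀.1.Preconnected := fun hp => hnc ((connected_iff _).mpr ⟨hp, ‹Nonempty W›⟩)
    rw [SimpleGraph.Preconnected] at hpre
    push_neg at hpre
    obtain ⟨x, y, hxy⟩ := hpre
    have hne : x ≠ y := by rintro rfl; exact hxy (Reachable.refl _)
    have hnm : s(x, y) ∉ T₀.1.edgeSet := fun hm => hxy (Adj.reachable hm)
    have hacyc' := isAcyclic_sup_edge T₀.2.2 hne hxy
    have hle' : H ≤ T₀.1 ⊔ fromEdgeSet {s(x, y)} := le_trans T₀.2.1 le_sup_left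
    have := hmax ⟨_, hle', hacyc'⟩
    simp only at this
    have hcount : (T₀.1 ⊔ fromEdgeSet {s(x, y)}).edgeSet.ncard = T₀.1.edgeSet.ncard + 1 := by
      rw [edgeSet_sup, edgeSet_fromEdgeSet]
      have hdiag : ({s(x, y)} : Set (Sym2 W)) \ {e | e.IsDiag} = {s(x, y)} := by
        ext e
        simp only [Set.mem_diff, Set.mem_singleton_iff, Set.mem_setOf_eq, and_iff_left_iff_imp]
        rintro rfl
        simpa using hne
      rw [show ({s(x, y)} : Set (Sym2 W)) \ Sym2.diagSet = {s(x, y)} from hdiag, Set.union_singleton, Set.ncard_insert_of_notMem hnm (Set.toFinite _)]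
    omega
  have htree : T₀.1.IsTree := ⟨hconn, T₀.2.2⟩
  have hcard := htree.card_edgeFinset
  have h1 : T₀.1.edgeFinset.card = T₀.1.edgeSet.ncard := by
    exact (Set.ncard_coe_finset _).symm.trans (by rw [coe_edgeFinset])
  have h2 : H.edgeSet.ncard ≤ T₀.1.edgeSet.ncard :=
    Set.ncard_le_ncard (edgeSet_mono T₀.2.1) (Set.toFinite _)
  omega

/-- Edge count of an induced subgraph. -/
lemma ncard_induce (H : SimpleGraph V) (Q : Set V) :
    (H.induce Q).edgeSet.ncard = {e ∈ H.edgeSet | ∀ v ∈ e, v ∈ Q}.ncard := by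
  have himg : {e ∈ H.edgeSet | ∀ v ∈ e, v ∈ Q} =
      Sym2.map (Subtype.val : Q → V) '' (H.induce Q).edgeSet := by
    ext e
    induction e using Sym2.ind with
    | _ x y =>
    constructor
    · rintro ⟨hxy, hall⟩
      have hx : x ∈ Q := hall x (Sym2.mem_mk_left _ _)
      have hy : y ∈ Q := hall y (Sym2.mem_mk_right _ _)
      refine ⟨s(⟨x, hx⟩, ⟨y, hy⟩), ?_, by simp⟩
      rw [mem_edgeSet]
      simp only [comap_adj, Function.Embedding.coe_subtype]
      exact hxy
    · rintro ⟨e', he', hmap⟩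
      induction e' using Sym2.ind with
      | _ a b =>
      rw [mem_edgeSet] at he'
      simp only [comap_adj, Function.Embedding.coe_subtype] at he'
      have : s(a.1, b.1) = s(x, y) := by simpa using hmap
      rcases Sym2.eq_iff.mp this with ⟨h1, h2⟩ | ⟨h1, h2⟩
      · subst h1; subst h2
        refine ⟨(mem_edgeSet _).mpr he', ?_⟩
        intro v hv
        rcases Sym2.mem_iff.mp hv with rfl | rfl
        · exact a.2
        · exact b.2
      · subst h1; subst h2
        refine ⟨(mem_edgeSet _).mpr he'.symm, ?_⟩
        intro v hv
        rcases Sym2.mem_iff.mp hv with rfl | rfl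
        · exact b.2
        · exact a.2
  rw [himg, Set.ncard_image_of_injective _ (Sym2.map.injective Subtype.val_injective)]


section Family

variable {V : Type*} [Fintype V]

lemma IsAcyclic.mono' {H H' : SimpleGraph V} (hle : H ≤ H') (h : H'.IsAcyclic) :
    H.IsAcyclic := by
  intro v c hc
  exact h (c.mapLe hle) ((SimpleGraph.Walk.mapLe_isCycle hle).mpr hc)

lemma edgeSet_single {x y : V} (h : x ≠ y) :
    (fromEdgeSet {s(x, y)} : SimpleGraph V).edgeSet = {s(x, y)} := by
  rw [edgeSet_fromEdgeSet]
  ext e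
  simp only [Set.mem_diff, Set.mem_singleton_iff, Set.mem_setOf_eq, and_iff_left_iff_imp]
  rintro rfl
  simpa using h

/-- A family of `k` edge-disjoint spanning forests of `G`. -/
def Valid (G : SimpleGraph V) (k : ℕ) (F : Fin k → SimpleGraph V) : Prop :=
  (∀ i, F i ≤ G ∧ (F i).IsAcyclic) ∧
    Pairwise fun i j => Disjoint (F i).edgeSet (F j).edgeSet

noncomputable def total (k : ℕ) (F : Fin k → SimpleGraph V) : ℕ := ∑ i, (F i).edgeSet.ncard

lemma total_update {k : ℕ} (F : Fin k → SimpleGraph V) (i : Fin k) (New : SimpleGraph V) :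
    total k (Function.update F i New)
      = New.edgeSet.ncard + ∑ j ∈ Finset.univ \ {i}, (F j).edgeSet.ncard := by
  classical
  rw [total]
  have h1 : ∀ j, ((Function.update F i New) j).edgeSet.ncard
      = Function.update (fun j => (F j).edgeSet.ncard) i New.edgeSet.ncard j := fun j => by
    exact Function.apply_update (fun _ H => H.edgeSet.ncard) F i New j
  rw [Finset.sum_congr rfl fun j _ => h1 j, Finset.sum_update_of_mem (Finset.mem_univ i)]

lemma total_diff {k : ℕ} (F : Fin k → SimpleGraph V) (i : Fin k) :
    total k F = (∑ j ∈ Finset.univ \ {i}, (F j).edgeSet.ncard) + (F i).edgeSet.ncard := by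
  classical
  rw [total]
  have := Finset.sum_eq_sum_sdiff_singleton_add (Finset.mem_univ i)
    (fun j => (F j).edgeSet.ncard)
  simpa using this

def IsMax (G : SimpleGraph V) (k : ℕ) (F : Fin k → SimpleGraph V) : Prop :=
  Valid G k F ∧ ∀ F', Valid G k F' → total k F' ≤ total k F

lemma exists_isMax (G : SimpleGraph V) (k : ℕ) : ∃ F, IsMax G k F := by
  have hne : Nonempty {F : Fin k → SimpleGraph V // Valid G k F} :=
    ⟨⟨fun _ => ⊥, fun _ => ⟨bot_le, isAcyclic_bot⟩, by
      intro i j _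
      simp [edgeSet_bot]⟩⟩
  obtain ⟨F₀, hm⟩ := Finite.exists_max (fun F : {F // Valid G k F} => total k F.1)
  exact ⟨F₀.1, F₀.2, fun F' hF' => hm ⟨F', hF'⟩⟩

/-- One exchange step on maximal families. -/
def Step (G : SimpleGraph V) (k : ℕ) (F F' : Fin k → SimpleGraph V) : Prop :=
  ∃ (i : Fin k) (x y a b : V), G.Adj x y ∧ (∀ j, s(x, y) ∉ (F j).edgeSet) ∧
    (∃ p : (F i).Walk x y, p.IsPath ∧ s(a, b) ∈ p.edges) ∧
    F' = Function.update F i ((F i).deleteEdges {s(a, b)} ⊔ fromEdgeSet {s(x, y)})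

lemma step_valid_total {G : SimpleGraph V} {k : ℕ} {F F' : Fin k → SimpleGraph V}
    (hF : Valid G k F) (hs : Step G k F F') : Valid G k F' ∧ total k F' = total k F := by
  obtain ⟨i, x, y, a, b, hadj, hnot, ⟨p, hp, hep⟩, rfl⟩ := hs
  have hne : x ≠ y := hadj.ne
  have hemem : s(a, b) ∈ (F i).edgeSet := p.edges_subset_edgeSet hep
  have hxyE : s(x, y) ∉ (F i).edgeSet := hnot i
  set New := (F i).deleteEdges {s(a, b)} ⊔ fromEdgeSet {s(x, y)} with hNew
  have hEnew : New.edgeSet = ((F i).edgeSet \ {s(a, b)}) ∪ {s(x, y)} := by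
    rw [hNew, edgeSet_sup, edgeSet_deleteEdges, edgeSet_single hne]
  have hacyc : New.IsAcyclic := by
    refine isAcyclic_sup_edge (IsAcyclic.mono' (deleteEdges_le _) (hF.1 i).2) hne ?_
    exact not_reachable_of_path_edge (hF.1 i).2 p hp hep
  have hcount : New.edgeSet.ncard = (F i).edgeSet.ncard := by
    rw [hEnew, Set.union_singleton,
      Set.ncard_insert_of_notMem (fun h => hxyE h.1) ((Set.toFinite _).diff),
      Set.ncard_diff_singleton_add_one hemem (Set.toFinite _)]
  constructor
  · constructor
    · intro j
      by_cases hj : j = i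
      · subst hj
        rw [Function.update_self]
        refine ⟨sup_le (le_trans (deleteEdges_le _) (hF.1 j).1) ?_, hacyc⟩
        intro a' b' hab'
        obtain ⟨hm, hne'⟩ := (fromEdgeSet_adj _).mp hab'
        rcases Sym2.eq_iff.mp (Set.mem_singleton_iff.mp hm) with ⟨rfl, rfl⟩ | ⟨rfl, rfl⟩
        · exact hadj
        · exact hadj.symm
      · rw [Function.update_of_ne hj]
        exact hF.1 j
    · intro j l hjl
      have hdisj : Disjoint New.edgeSet ((F l).edgeSet) → l ≠ i →
          Disjoint New.edgeSet ((Function.update F i New) l).edgeSet := by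
        intro hd hl
        rwa [Function.update_of_ne hl]
      by_cases hj : j = i
      · subst hj
        have hl : l ≠ j := hjl.symm
        rw [Function.update_self, Function.update_of_ne hl]
        rw [hEnew, Set.disjoint_union_left, Set.disjoint_singleton_left]
        exact ⟨Set.disjoint_of_subset_left Set.diff_subset (hF.2 hjl), hnot l⟩
      · rw [Function.update_of_ne hj]
        by_cases hl : l = i
        · subst hl
          rw [Function.update_self]
          rw [hEnew, Set.disjoint_union_right, Set.disjoint_singleton_right]
          exact ⟨Set.disjoint_of_subset_right Set.diff_subset (hF.2 hjl), hnot j⟩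
        · rw [Function.update_of_ne hl]
          exact hF.2 hjl
  · rw [total_update F i New, hcount, total_diff F i]
    omega

def Reach (G : SimpleGraph V) (k : ℕ) : (Fin k → SimpleGraph V) → (Fin k → SimpleGraph V) → Prop :=
  Relation.ReflTransGen (Step G k)

lemma IsMax.reach {G : SimpleGraph V} {k : ℕ} {F F' : Fin k → SimpleGraph V}
    (hm : IsMax G k F) (h : Reach G k F F') : IsMax G k F' := by
  induction h with
  | refl => exact hm
  | tail _ hbc ih =>
    obtain ⟨hv, ht⟩ := step_valid_total ih.1 hbc
    exact ⟨hv, fun F'' h'' => ht ▸ ih.2 F'' h''⟩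

/-- The set of edges missing from some reachable family. -/
def E0 (G : SimpleGraph V) (k : ℕ) (F₀ : Fin k → SimpleGraph V) : Set (Sym2 V) :=
  {e | e ∈ G.edgeSet ∧ ∃ F', Reach G k F₀ F' ∧ ∀ j, e ∉ (F' j).edgeSet}

def G0 (G : SimpleGraph V) (k : ℕ) (F₀ : Fin k → SimpleGraph V) : SimpleGraph V :=
  fromEdgeSet (E0 G k F₀)

/-- Key lemma: for a reachable family and a missing edge, there is a path joining its
endpoints all of whose edges are in `E0`. -/
lemma exists_good_path {G : SimpleGraph V} {k : ℕ} {F₀ F' : Fin k → SimpleGraph V}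
    (hmax : IsMax G k F₀) (hre : Reach G k F₀ F') {x y : V}
    (hadj : G.Adj x y) (hnot : ∀ j, s(x, y) ∉ (F' j).edgeSet) (i : Fin k) :
    ∃ p : (F' i).Walk x y, p.IsPath ∧ ∀ e' ∈ p.edges, e' ∈ E0 G k F₀ := by
  classical
  have hmax' := hmax.reach hre
  have hreach : (F' i).Reachable x y := by
    by_contra hnr
    have hvalid : Valid G k (Function.update F' i (F' i ⊔ fromEdgeSet {s(x, y)})) := by
      constructor
      · intro j
        by_cases hj : j = i
        · subst hj
          rw [Function.update_self]
          refine ⟨sup_le (hmax'.1.1 j).1 ?_, isAcyclic_sup_edge (hmax'.1.1 j).2 hadj.ne hnr⟩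
          intro a' b' hab'
          obtain ⟨hm, hne'⟩ := (fromEdgeSet_adj _).mp hab'
          rcases Sym2.eq_iff.mp (Set.mem_singleton_iff.mp hm) with ⟨rfl, rfl⟩ | ⟨rfl, rfl⟩
          · exact hadj
          · exact hadj.symm
        · rw [Function.update_of_ne hj]
          exact hmax'.1.1 j
      · intro j l hjl
        have hEadd : (F' i ⊔ fromEdgeSet {s(x, y)}).edgeSet = (F' i).edgeSet ∪ {s(x, y)} := by
          rw [edgeSet_sup, edgeSet_single hadj.ne]
        by_cases hj : j = i
        · subst hj
          rw [Function.update_self, Function.update_of_ne hjl.symm, hEadd,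
            Set.disjoint_union_left, Set.disjoint_singleton_left]
          exact ⟨hmax'.1.2 hjl, hnot l⟩
        · rw [Function.update_of_ne hj]
          by_cases hl : l = i
          · subst hl
            rw [Function.update_self, hEadd, Set.disjoint_union_right,
              Set.disjoint_singleton_right]
            exact ⟨hmax'.1.2 hjl, hnot j⟩
          · rw [Function.update_of_ne hl]
            exact hmax'.1.2 hjl
    have hle := hmax'.2 _ hvalid
    have hcount : (F' i ⊔ fromEdgeSet {s(x, y)}).edgeSet.ncard = (F' i).edgeSet.ncard + 1 := by
      rw [edgeSet_sup, edgeSet_single hadj.ne, Set.union_singleton,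
        Set.ncard_insert_of_notMem (hnot i) (Set.toFinite _)]
    rw [total_update F' i _, hcount, total_diff F' i] at hle
    omega
  obtain ⟨w⟩ := hreach
  refine ⟨w.bypass, w.bypass_isPath, ?_⟩
  intro e' he'
  revert he'
  induction e' using Sym2.ind with | _ a b => ?_
  intro he'
  have hstep : Step G k F'
      (Function.update F' i ((F' i).deleteEdges {s(a, b)} ⊔ fromEdgeSet {s(x, y)})) :=
    ⟨i, x, y, a, b, hadj, hnot, ⟨w.bypass, w.bypass_isPath, he'⟩, rfl⟩
  have hemem : s(a, b) ∈ (F' i).edgeSet := w.bypass.edges_subset_edgeSet he'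
  refine ⟨edgeSet_mono (hmax'.1.1 i).1 hemem, Function.update F' i _, hre.tail hstep, ?_⟩
  intro j
  by_cases hj : j = i
  · subst hj
    rw [Function.update_self, edgeSet_sup, edgeSet_deleteEdges, edgeSet_single hadj.ne]
    rintro (⟨-, hmem⟩ | hmem)
    · exact hmem rfl
    · rw [Set.mem_singleton_iff] at hmem
      exact hnot j (hmem ▸ hemem)
  · rw [Function.update_of_ne hj]
    exact Set.disjoint_right.mp (hmax'.1.2 hj) hemem

lemma support_reach_G0 {G : SimpleGraph V} {k : ℕ} {F₀ : Fin k → SimpleGraph V}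
    {H : SimpleGraph V} :
    ∀ {u v : V} (w : H.Walk u v), (∀ e ∈ w.edges, e ∈ E0 G k F₀) →
      ∀ z ∈ w.support, (G0 G k F₀).Reachable u z := by
  intro u v w
  induction w with
  | nil =>
    intro _ z hz
    simp only [SimpleGraph.Walk.support_nil, List.mem_singleton] at hz
    exact hz ▸ Reachable.refl _
  | @cons a b c hadj q ih =>
    intro hE z hz
    have hadj0 : (G0 G k F₀).Adj a b :=
      (fromEdgeSet_adj _).mpr ⟨hE _ (by rw [SimpleGraph.Walk.edges_cons]; exact List.mem_cons_self), hadj.ne⟩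
    rw [SimpleGraph.Walk.support_cons, List.mem_cons] at hz
    rcases hz with rfl | hz
    · exact Reachable.refl _
    · refine hadj0.reachable.trans (ih ?_ z hz)
      intro e he
      exact hE e (by rw [SimpleGraph.Walk.edges_cons]; exact List.mem_cons_of_mem _ he)

end Family
section Core

variable {V : Type*} [Fintype V]

lemma reachIn_transfer {G : SimpleGraph V} {k : ℕ} {F₀ F' : Fin k → SimpleGraph V}
    (hmax : IsMax G k F₀) (hre : Reach G k F₀ F') {U : Set V}
    (hU : ∀ a ∈ U, ∀ b, (G0 G k F₀).Reachable a b → b ∈ U) :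
    ∀ (i : Fin k) (u v : V), ReachIn (F' i) U u v → ReachIn (F₀ i) U u v := by
  classical
  have key : ∀ (X : Fin k → SimpleGraph V), Relation.ReflTransGen (Step G k) X F' →
      Reach G k F₀ X → ∀ (i : Fin k) (u v : V),
        ReachIn (F' i) U u v → ReachIn (X i) U u v := by
    intro X hX
    induction hX using Relation.ReflTransGen.head_induction_on with
    | refl => intro _ i u v h; exact h
    | @head A C hstep htail ih =>
      intro hA i u v h
      have hreC : Reach G k F₀ C := hA.tail hstep
      have hC : ReachIn (C i) U u v := ih hreC i u v h
      obtain ⟨i0, x, y, a, b, hadj, hnot, ⟨p, hp, hep⟩, rfl⟩ := hstep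
      by_cases hii : i = i0
      · subst hii
        rw [Function.update_self] at hC
        obtain ⟨w, hw⟩ := hC
        refine reachIn_patch ?_ w hw
        intro a' b' hab' ha' hb'
        rcases hab' with hab' | hab'
        · rw [deleteEdges_adj] at hab'
          exact ReachIn.of_adj hab'.1 ha' hb'
        · obtain ⟨hm, hne'⟩ := (fromEdgeSet_adj _).mp hab'
          rw [Set.mem_singleton_iff] at hm
          obtain ⟨q, hq, hqE⟩ := exists_good_path hmax hA hadj hnot i
          have hxU : x ∈ U := by
            rcases Sym2.eq_iff.mp hm with ⟨rfl, rfl⟩ | ⟨rfl, rfl⟩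
            exacts [ha', hb']
          have hsupp : ∀ z ∈ q.support, z ∈ U := fun z hz =>
            hU x hxU z (support_reach_G0 q hqE z hz)
          have hxy : ReachIn (A i) U x y := ⟨q, hsupp⟩
          rcases Sym2.eq_iff.mp hm with ⟨rfl, rfl⟩ | ⟨rfl, rfl⟩
          · exact hxy
          · exact hxy.symm
      · rwa [Function.update_of_ne hii] at hC
  exact key F₀ hre Relation.ReflTransGen.refl

lemma edge_core {G : SimpleGraph V} {k : ℕ} {F₀ : Fin k → SimpleGraph V}
    (hmax : IsMax G k F₀) {x y : V} (hE : s(x, y) ∈ E0 G k F₀) (hne : x ≠ y) (i : Fin k) :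
    ReachIn (F₀ i) {w | (G0 G k F₀).Reachable x w} x y := by
  obtain ⟨hmem, F', hre, hnot⟩ := hE
  have hadj : G.Adj x y := (mem_edgeSet _).mp hmem
  obtain ⟨p, hp, hpE⟩ := exists_good_path hmax hre hadj hnot i
  have hsupp : ∀ z ∈ p.support, z ∈ {w | (G0 G k F₀).Reachable x w} := fun z hz =>
    support_reach_G0 p hpE z hz
  refine reachIn_transfer hmax hre ?_ i x y ⟨p, hsupp⟩
  intro a ha b hb
  exact ha.trans hb

lemma comp_core_aux {G : SimpleGraph V} {k : ℕ} {F₀ : Fin k → SimpleGraph V}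
    (hmax : IsMax G k F₀) (i : Fin k) :
    ∀ {u v : V}, (w : (G0 G k F₀).Walk u v) →
      ReachIn (F₀ i) {z | (G0 G k F₀).Reachable u z} u v := by
  intro u v w
  induction w with
  | nil => exact ReachIn.refl (Reachable.refl _)
  | @cons a b c hadj q ih =>
    have hm : s(a, b) ∈ E0 G k F₀ := ((fromEdgeSet_adj _).mp hadj).1
    have h1 : ReachIn (F₀ i) {z | (G0 G k F₀).Reachable a z} a b :=
      edge_core hmax hm hadj.ne i
    have hset : {z | (G0 G k F₀).Reachable b z} = {z | (G0 G k F₀).Reachable a z} := by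
      ext z
      exact ⟨fun hz => hadj.reachable.trans hz, fun hz => hadj.symm.reachable.trans hz⟩
    exact h1.trans (hset ▸ ih)

lemma comp_core {G : SimpleGraph V} {k : ℕ} {F₀ : Fin k → SimpleGraph V}
    (hmax : IsMax G k F₀) {u v : V} (h : (G0 G k F₀).Reachable u v) (i : Fin k) :
    ReachIn (F₀ i) {z | (G0 G k F₀).Reachable u z} u v := by
  obtain ⟨w⟩ := h
  exact comp_core_aux hmax i w

end Core
lemma sum_card_filter {α β : Type*} [Fintype β] (s : Finset α) (p : β → α → Prop)
    [∀ b a, Decidable (p b a)] :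
    ∑ b : β, (s.filter (p b)).card = ∑ a ∈ s, (Finset.univ.filter (fun b => p b a)).card := by
  simp only [Finset.card_filter]
  exact Finset.sum_comm

end NWaux

/-- (Tutte, Nash-Williams) Every `2k`-edge-connected finite simple graph contains `k`
pairwise edge-disjoint spanning trees. -/
theorem hasEdgeDisjointSpanningTrees_of_edgeConnected {V : Type*} [Fintype V]
    (G : SimpleGraph V) (k : ℕ) (hk : 1 ≤ k) (hG : _root_.IsEdgeConnected G (2 * k)) :
    HasEdgeDisjointSpanningTrees G k := by
  classical
  obtain ⟨F₀, hmax⟩ := NWaux.exists_isMax G k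
  have hVne : Nonempty V := hG.1.nonempty
  set Γ : SimpleGraph V := NWaux.G0 G k F₀ with hGamma
  haveI : Finite Γ.ConnectedComponent := Quot.finite _
  haveI : Fintype Γ.ConnectedComponent := Fintype.ofFinite _
  haveI : Nonempty Γ.ConnectedComponent :=
    ⟨Γ.connectedComponentMk (Classical.arbitrary V)⟩
  by_cases hp1 : Fintype.card Γ.ConnectedComponent ≤ 1
  · -- all forests are connected, hence spanning trees
    haveI hsub : Subsingleton Γ.ConnectedComponent :=
      Fintype.card_le_one_iff_subsingleton.mp hp1
    have hconn : ∀ i, (F₀ i).Connected := by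
      intro i
      rw [connected_iff]
      refine ⟨fun u v => ?_, hVne⟩
      have hr : Γ.Reachable u v := ConnectedComponent.exact (Subsingleton.elim _ _)
      exact (NWaux.comp_core hmax hr i).reachable
    exact ⟨F₀, fun i => ⟨(hmax.1.1 i).1, hconn i, (hmax.1.1 i).2⟩, hmax.1.2⟩
  · exfalso
    have hp2 : 2 ≤ Fintype.card Γ.ConnectedComponent := by omega
    set mk : V → Γ.ConnectedComponent := Γ.connectedComponentMk with hmk
    set ef : SimpleGraph V → Finset (Sym2 V) :=
      fun H => (Set.toFinite H.edgeSet).toFinset with hef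
    set n := Fintype.card V with hn
    set p := Fintype.card Γ.ConnectedComponent with hp
    have hmemef : ∀ (H : SimpleGraph V) (e : Sym2 V), e ∈ ef H ↔ e ∈ H.edgeSet := by
      intro H e
      rw [hef]
      exact Set.Finite.mem_toFinset _
    -- evaluation of `Same` on explicit edges
    have hSameIff : ∀ x y : V,
        (∀ v ∈ (s(x, y) : Sym2 V), ∀ w ∈ (s(x, y) : Sym2 V), mk v = mk w) ↔ mk x = mk y := by
      intro x y
      constructor
      · intro h
        exact h x (Sym2.mem_mk_left _ _) y (Sym2.mem_mk_right _ _)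
      · intro h v hv w hw
        rcases Sym2.mem_iff.mp hv with rfl | rfl <;> rcases Sym2.mem_iff.mp hw with rfl | rfl
        · rfl
        · exact h
        · exact h.symm
        · rfl
    -- fiberwise vertex count
    have hQcard : ∑ c, (Finset.univ.filter (fun v => mk v = c)).card = n := by
      rw [hn, ← Finset.card_univ]
      exact (Finset.card_eq_sum_card_fiberwise (fun v _ => Finset.mem_univ (mk v))).symm
    -- per-class within-edge bound
    have hQbound : ∀ (i : Fin k) (c : Γ.ConnectedComponent),
        (Finset.univ.filter (fun v => mk v = c)).card ≤
          ((ef (F₀ i)).filter (fun e => ∀ v ∈ e, mk v = c)).card + 1 := by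
      intro i c
      set Q : Set V := ↑(Finset.univ.filter (fun v => mk v = c)) with hQ
      have hmemQ : ∀ z : V, z ∈ Q ↔ mk z = c := by
        intro z
        rw [hQ]
        simp
      obtain ⟨v0, hv0⟩ := c.exists_rep
      have hv0' : mk v0 = c := hv0
      haveI : Nonempty Q := ⟨⟨v0, (hmemQ v0).mpr hv0'⟩⟩
      have hconnQ : ((F₀ i).induce Q).Connected := by
        rw [connected_iff]
        refine ⟨?_, ‹_›⟩
        rintro ⟨a, ha⟩ ⟨b, hb⟩
        have hac : mk a = c := (hmemQ a).mp ha
        have hbc : mk b = c := (hmemQ b).mp hb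
        have hreach : Γ.Reachable a b := ConnectedComponent.exact (hac.trans hbc.symm)
        refine NWaux.reachIn_induce (NWaux.comp_core hmax hreach i) ?_ ha hb
        intro z hz
        refine (hmemQ z).mpr ?_
        have : mk a = mk z := ConnectedComponent.sound hz
        exact this.symm.trans hac
      have hcard1 := NWaux.conn_card_le hconnQ
      have hcard2 : Fintype.card Q = (Finset.univ.filter (fun v => mk v = c)).card := by
        rw [← Set.ncard_coe_finset, ← hQ, Set.ncard_eq_toFinset_card', Set.toFinset_card]
      have hcard3 : ((F₀ i).induce Q).edgeSet.ncard =
          ((ef (F₀ i)).filter (fun e => ∀ v ∈ e, mk v = c)).card := by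
        rw [NWaux.ncard_induce]
        have hseteq : {e ∈ (F₀ i).edgeSet | ∀ v ∈ e, v ∈ Q} =
            ↑((ef (F₀ i)).filter (fun e => ∀ v ∈ e, mk v = c)) := by
          ext e
          simp only [Set.mem_setOf_eq, Finset.coe_filter, hmemef, hmemQ]
        rw [hseteq, Set.ncard_coe_finset]
      omega
    -- swap the double sum
    have hswap : ∀ i : Fin k,
        ∑ c, ((ef (F₀ i)).filter (fun e => ∀ v ∈ e, mk v = c)).card =
          ((ef (F₀ i)).filter (fun e => ∀ v ∈ e, ∀ w ∈ e, mk v = mk w)).card := by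
      intro i
      rw [NWaux.sum_card_filter (ef (F₀ i)) (fun c e => ∀ v ∈ e, mk v = c),
        Finset.card_filter]
      refine Finset.sum_congr rfl ?_
      intro e he
      induction e using Sym2.ind with | _ x y => ?_
      by_cases hxy : mk x = mk y
      · rw [if_pos ((hSameIff x y).mpr hxy)]
        have hfil : Finset.univ.filter
            (fun c => ∀ v ∈ (s(x, y) : Sym2 V), mk v = c) = {mk x} := by
          ext c
          simp only [Finset.mem_filter, Finset.mem_univ, true_and, Finset.mem_singleton,
            Sym2.mem_iff, forall_eq_or_imp, forall_eq]
          constructor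
          · rintro ⟨h1, _⟩
            exact h1.symm
          · rintro rfl
            exact ⟨rfl, hxy.symm⟩
        rw [hfil, Finset.card_singleton]
      · rw [if_neg (fun hs => hxy ((hSameIff x y).mp hs))]
        rw [Finset.card_eq_zero, Finset.filter_eq_empty_iff]
        intro c _
        simp only [Sym2.mem_iff, forall_eq_or_imp, forall_eq]
        rintro ⟨h1, h2⟩
        exact hxy (h1.trans h2.symm)
    -- forest edge bound
    have hforest : ∀ i : Fin k, (ef (F₀ i)).card + 1 ≤ n := by
      intro i
      have h1 := NWaux.acyclic_card_le (hmax.1.1 i).2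
      rwa [Set.ncard_eq_toFinset_card _ (Set.toFinite _)] at h1
    -- cross-edge bound per forest
    have hsplit : ∀ i : Fin k,
        ((ef (F₀ i)).filter (fun e => ∀ v ∈ e, ∀ w ∈ e, mk v = mk w)).card +
          ((ef (F₀ i)).filter (fun e => ¬∀ v ∈ e, ∀ w ∈ e, mk v = mk w)).card =
            (ef (F₀ i)).card := fun i =>
      Finset.card_filter_add_card_filter_not _
    have hcrossb : ∀ i : Fin k,
        ((ef (F₀ i)).filter (fun e => ¬∀ v ∈ e, ∀ w ∈ e, mk v = mk w)).card + 1 ≤ p := by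
      intro i
      have hA : n ≤ (∑ c, ((ef (F₀ i)).filter (fun e => ∀ v ∈ e, mk v = c)).card) + p := by
        have h1 : ∑ c, (Finset.univ.filter (fun v => mk v = c)).card ≤
            ∑ c, (((ef (F₀ i)).filter (fun e => ∀ v ∈ e, mk v = c)).card + 1) :=
          Finset.sum_le_sum fun c _ => hQbound i c
        rw [Finset.sum_add_distrib, Finset.sum_const, Finset.card_univ, smul_eq_mul,
          mul_one] at h1
        omega
      rw [hswap i] at hA
      have h2 := hsplit i
      have h3 := hforest i
      omega
    -- boundary edge count per class
    have hbd : ∀ c : Γ.ConnectedComponent, 2 * k ≤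
        ((ef G).filter (fun e => (∃ v ∈ e, mk v = c) ∧ ¬∀ v ∈ e, mk v = c)).card := by
      intro c
      by_contra h'
      rw [not_le] at h'
      set S := (ef G).filter (fun e => (∃ v ∈ e, mk v = c) ∧ ¬∀ v ∈ e, mk v = c) with hS
      have hsubE : ↑S ⊆ G.edgeSet := by
        intro e he
        rw [Finset.mem_coe, hS, Finset.mem_filter] at he
        exact (hmemef G e).mp he.1
      have hconn' := hG.2 S hsubE h'
      obtain ⟨v0, hv0⟩ := c.exists_rep
      have hv0' : mk v0 = c := hv0
      obtain ⟨c', hc'⟩ := Fintype.exists_ne_of_one_lt_card (by omega) c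
      obtain ⟨w0, hw0⟩ := c'.exists_rep
      have hw0' : mk w0 = c' := hw0
      obtain ⟨wk⟩ := hconn'.preconnected v0 w0
      have hfix : ∀ z ∈ wk.support, z ∈ {v : V | mk v = c} := by
        refine NWaux.walk_fix ?_ wk hv0'
        intro a b hab hac
        rw [deleteEdges_adj] at hab
        by_contra hbc
        refine hab.2 ?_
        rw [Finset.mem_coe, hS, Finset.mem_filter]
        refine ⟨(hmemef G _).mpr ((mem_edgeSet _).mpr hab.1), ⟨a, Sym2.mem_mk_left _ _, hac⟩, ?_⟩
        intro hall
        exact hbc (hall b (Sym2.mem_mk_right _ _))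
      have := hfix w0 wk.end_mem_support
      rw [Set.mem_setOf_eq] at this
      exact hc' (hw0'.symm.trans this)
    -- double counting the boundary
    have hdouble : ∑ c, ((ef G).filter
          (fun e => (∃ v ∈ e, mk v = c) ∧ ¬∀ v ∈ e, mk v = c)).card =
        2 * ((ef G).filter (fun e => ¬∀ v ∈ e, ∀ w ∈ e, mk v = mk w)).card := by
      rw [NWaux.sum_card_filter (ef G)
        (fun c e => (∃ v ∈ e, mk v = c) ∧ ¬∀ v ∈ e, mk v = c),
        Finset.card_filter, Finset.mul_sum]
      refine Finset.sum_congr rfl ?_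
      intro e he
      induction e using Sym2.ind with | _ x y => ?_
      have hSame := hSameIff x y
      by_cases hxy : mk x = mk y
      · have h0 : Finset.univ.filter (fun c => (∃ v ∈ (s(x, y) : Sym2 V), mk v = c) ∧
            ¬∀ v ∈ (s(x, y) : Sym2 V), mk v = c) = ∅ := by
          rw [Finset.filter_eq_empty_iff]
          intro c _
          rintro ⟨⟨v, hv, hvc⟩, hnall⟩
          apply hnall
          have hxyall : ∀ u ∈ (s(x, y) : Sym2 V), mk u = mk x := by
            intro u hu
            rcases Sym2.mem_iff.mp hu with rfl | rfl
            · rfl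
            · exact hxy.symm
          intro w hw
          exact (hxyall w hw).trans ((hxyall v hv).symm.trans hvc)
        rw [h0, Finset.card_empty, if_neg (not_not.mpr (hSame.mpr hxy)), mul_zero]
      · have h2 : Finset.univ.filter (fun c => (∃ v ∈ (s(x, y) : Sym2 V), mk v = c) ∧
            ¬∀ v ∈ (s(x, y) : Sym2 V), mk v = c) = {mk x, mk y} := by
          ext c
          simp only [Finset.mem_filter, Finset.mem_univ, true_and, Finset.mem_insert,
            Finset.mem_singleton, Sym2.mem_iff, exists_eq_or_imp, exists_eq_left,
            forall_eq_or_imp, forall_eq]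
          constructor
          · rintro ⟨h1 | h1, _⟩
            · exact Or.inl h1.symm
            · exact Or.inr h1.symm
          · rintro (rfl | rfl)
            · exact ⟨Or.inl rfl, fun hpair => hxy (hpair.1.trans hpair.2.symm)⟩
            · exact ⟨Or.inr rfl, fun hpair => hxy (hpair.1.trans hpair.2.symm)⟩
        rw [h2, Finset.card_pair hxy, if_pos (fun hs => hxy (hSame.mp hs)), mul_one]
    -- every cross edge of `G` lies in some forest
    have hcrossle : ((ef G).filter (fun e => ¬∀ v ∈ e, ∀ w ∈ e, mk v = mk w)).card ≤
        ∑ i, ((ef (F₀ i)).filter (fun e => ¬∀ v ∈ e, ∀ w ∈ e, mk v = mk w)).card := by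
      refine le_trans (Finset.card_le_card ?_) Finset.card_biUnion_le
      intro e he
      rw [Finset.mem_filter] at he
      obtain ⟨heG, hns⟩ := he
      rw [Finset.mem_biUnion]
      have hex : ∃ i, e ∈ ef (F₀ i) := by
        by_contra hall
        push_neg at hall
        have heE0 : e ∈ NWaux.E0 G k F₀ :=
          ⟨(hmemef G e).mp heG, F₀, Relation.ReflTransGen.refl,
            fun j hj => hall j ((hmemef (F₀ j) e).mpr hj)⟩
        apply hns
        revert heE0 hns heG
        induction e using Sym2.ind with | _ x y => ?_
        intro heG hns heE0
        have hne : x ≠ y := by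
          have := G.not_isDiag_of_mem_edgeSet ((hmemef G _).mp heG)
          simpa [Sym2.mk_isDiag_iff] using this
        have hadj : Γ.Adj x y := by
          rw [hGamma]
          exact (fromEdgeSet_adj _).mpr ⟨heE0, hne⟩
        exact (hSameIff x y).mpr (ConnectedComponent.connectedComponentMk_eq_of_adj hadj)
      obtain ⟨i, hi⟩ := hex
      exact ⟨i, Finset.mem_univ i, Finset.mem_filter.mpr ⟨hi, hns⟩⟩
    -- final arithmetic
    have hsum1 : p * (2 * k) ≤
        2 * ((ef G).filter (fun e => ¬∀ v ∈ e, ∀ w ∈ e, mk v = mk w)).card := by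
      rw [← hdouble]
      calc p * (2 * k) = ∑ _c : Γ.ConnectedComponent, 2 * k := by
            rw [Finset.sum_const, Finset.card_univ, smul_eq_mul]
        _ ≤ _ := Finset.sum_le_sum fun c _ => hbd c
    have hsum2 : (∑ i, ((ef (F₀ i)).filter
          (fun e => ¬∀ v ∈ e, ∀ w ∈ e, mk v = mk w)).card) + k ≤ k * p := by
      calc (∑ i, ((ef (F₀ i)).filter (fun e => ¬∀ v ∈ e, ∀ w ∈ e, mk v = mk w)).card) + k
          = ∑ i : Fin k, (((ef (F₀ i)).filter
              (fun e => ¬∀ v ∈ e, ∀ w ∈ e, mk v = mk w)).card + 1) := by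
            rw [Finset.sum_add_distrib, Finset.sum_const, Finset.card_univ,
              Fintype.card_fin, smul_eq_mul, mul_one]
        _ ≤ ∑ _i : Fin k, p := Finset.sum_le_sum fun i _ => hcrossb i
        _ = k * p := by rw [Finset.sum_const, Finset.card_univ, Fintype.card_fin, smul_eq_mul]
    have hkp : k * p ≤ ((ef G).filter (fun e => ¬∀ v ∈ e, ∀ w ∈ e, mk v = mk w)).card := by
      have h2 : 2 * (k * p) ≤
          2 * ((ef G).filter (fun e => ¬∀ v ∈ e, ∀ w ∈ e, mk v = mk w)).card := by
        calc 2 * (k * p) = p * (2 * k) := by ring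
          _ ≤ _ := hsum1
      exact Nat.le_of_mul_le_mul_left h2 (by norm_num)
    have h3 : ((ef G).filter (fun e => ¬∀ v ∈ e, ∀ w ∈ e, mk v = mk w)).card + k ≤ k * p :=
      le_trans (Nat.add_le_add_right hcrossle k) hsum2
    have h4 := le_trans h3 hkp
    omega
end

section
/- (Nash-Williams) For any finite simple graph G with at least one edge, the arboricity of G equals the maximum, over all subgraphs H of G with at least 2 vertices, of ⌈|E(H)| / (|V(H)| − 1)⌉. -/
open SimpleGraph

/-- The arboricity of `G`: the minimum number of edge-disjoint forests (acyclic spanning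
subgraphs) into which the edge set of `G` can be decomposed. -/
noncomputable def arboricity {V : Type*} (G : SimpleGraph V) : ℕ :=
  sInf {t | ∃ F : Fin t → SimpleGraph V,
    (∀ i, F i ≤ G ∧ (F i).IsAcyclic) ∧
    (Pairwise fun i j => Disjoint (F i).edgeSet (F j).edgeSet) ∧
    (⋃ i, (F i).edgeSet) = G.edgeSet}

namespace NashW
open Function
set_option linter.unusedSectionVars false
set_option maxHeartbeats 1600000

set_option linter.unusedSectionVars false

variable {V : Type*} [Fintype V]

noncomputable def ncomp (G : SimpleGraph V) : ℕ := Nat.card G.ConnectedComponent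

lemma reachable_bot {u v : V} (h : (⊥ : SimpleGraph V).Reachable u v) : u = v := by
  obtain ⟨p⟩ := h
  cases p with
  | nil => rfl
  | cons h _ => exact absurd h (by simp)

lemma ncomp_bot : ncomp (⊥ : SimpleGraph V) = Fintype.card V := by
  rw [ncomp, ← Nat.card_eq_fintype_card]
  apply Nat.card_congr
  refine (Equiv.ofBijective (fun v => (⊥ : SimpleGraph V).connectedComponentMk v)
    ⟨fun u v h => reachable_bot (ConnectedComponent.eq.mp h), fun C => ?_⟩).symm
  obtain ⟨v, rfl⟩ := C.exists_rep
  exact ⟨v, rfl⟩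

/-- The natural map on connected components induced by coarsening reachability. -/
noncomputable def cmap {G G' : SimpleGraph V}
    (h : ∀ u v, G.Reachable u v → G'.Reachable u v) :
    G.ConnectedComponent → G'.ConnectedComponent :=
  ConnectedComponent.lift (fun v => G'.connectedComponentMk v)
    (fun v w p _ => ConnectedComponent.eq.mpr (h v w ⟨p⟩))

@[simp] lemma cmap_mk {G G' : SimpleGraph V}
    (h : ∀ u v, G.Reachable u v → G'.Reachable u v) (v : V) :
    cmap h (G.connectedComponentMk v) = G'.connectedComponentMk v := rfl

lemma cmap_surjective {G G' : SimpleGraph V}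
    (h : ∀ u v, G.Reachable u v → G'.Reachable u v) : Surjective (cmap h) := by
  intro C
  obtain ⟨v, rfl⟩ := C.exists_rep
  exact ⟨G.connectedComponentMk v, rfl⟩

lemma ncomp_le_of_reachable_imp {G G' : SimpleGraph V}
    (h : ∀ u v, G.Reachable u v → G'.Reachable u v) : ncomp G' ≤ ncomp G :=
  Nat.card_le_card_of_surjective (cmap h) (cmap_surjective h)

lemma card_lt_of_surjective_of_eq {α β : Type*} [Finite α] (f : α → β) (hf : Surjective f)
    {a b : α} (hab : a ≠ b) (hfab : f a = f b) : Nat.card β < Nat.card α := by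
  classical
  have : Finite β := Finite.of_surjective f hf
  have hα := Fintype.ofFinite α
  have hβ := Fintype.ofFinite β
  obtain ⟨g, hg⟩ := hf.hasRightInverse
  have hginj : Injective g := hg.injective
  rw [Nat.card_eq_fintype_card, Nat.card_eq_fintype_card]
  by_cases hga : g (f a) = a
  · refine Fintype.card_lt_of_injective_of_notMem g hginj (b := b) ?_
    rintro ⟨d, hd⟩
    have h1 : d = f b := by rw [← hd, hg d]
    have h2 : g (f a) = b := by rw [hfab, ← h1, hd]
    exact hab (hga ▸ h2 ▸ rfl)
  · refine Fintype.card_lt_of_injective_of_notMem g hginj (b := a) ?_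
    rintro ⟨d, hd⟩
    have h1 : d = f a := by rw [← hd, hg d]
    exact hga (h1 ▸ hd)

lemma ncomp_lt_of_reachable_imp {G G' : SimpleGraph V} {x y : V}
    (h : ∀ u v, G.Reachable u v → G'.Reachable u v)
    (hx : ¬ G.Reachable x y) (hy : G'.Reachable x y) : ncomp G' < ncomp G := by
  refine card_lt_of_surjective_of_eq (cmap h) (cmap_surjective h)
    (a := G.connectedComponentMk x) (b := G.connectedComponentMk y) ?_ ?_
  · exact fun hc => hx (ConnectedComponent.eq.mp hc)
  · exact ConnectedComponent.eq.mpr hy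

set_option linter.unusedSectionVars false

lemma isAcyclic_mono {G H : SimpleGraph V} (hle : H ≤ G) (h : G.IsAcyclic) : H.IsAcyclic :=
  fun _ c hc => h (c.mapLe hle) (hc.mapLe hle)

lemma reachable_deleteEdges_cases {G : SimpleGraph V} {a b u v : V}
    (h : G.Reachable u v) :
    (G.deleteEdges {s(a,b)}).Reachable u v ∨
    ((G.deleteEdges {s(a,b)}).Reachable u a ∧ (G.deleteEdges {s(a,b)}).Reachable b v) ∨
    ((G.deleteEdges {s(a,b)}).Reachable u b ∧ (G.deleteEdges {s(a,b)}).Reachable a v) := by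
  obtain ⟨p⟩ := h
  induction p with
  | nil => exact Or.inl (Reachable.refl _)
  | @cons u w v hadj p ih =>
    by_cases he : s(u, w) = s(a, b)
    · rw [Sym2.eq_iff] at he
      rcases he with ⟨rfl, rfl⟩ | ⟨rfl, rfl⟩
      · rcases ih with h1 | ⟨h2a, h2b⟩ | ⟨h3a, h3b⟩
        · exact Or.inr (Or.inl ⟨Reachable.refl _, h1⟩)
        · exact Or.inl ((h2a.symm).trans h2b)
        · exact Or.inl h3b
      · rcases ih with h1 | ⟨h2a, h2b⟩ | ⟨h3a, h3b⟩
        · exact Or.inr (Or.inr ⟨Reachable.refl _, h1⟩)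
        · exact Or.inl h2b
        · exact Or.inl (h3a.symm.trans h3b)
    · have hadj' : (G.deleteEdges {s(a,b)}).Adj u w := by
        rw [deleteEdges_adj]; exact ⟨hadj, by simpa using he⟩
      rcases ih with h1 | ⟨h2a, h2b⟩ | ⟨h3a, h3b⟩
      · exact Or.inl (hadj'.reachable.trans h1)
      · exact Or.inr (Or.inl ⟨hadj'.reachable.trans h2a, h2b⟩)
      · exact Or.inr (Or.inr ⟨hadj'.reachable.trans h3a, h3b⟩)

lemma ncomp_deleteEdge_le (G : SimpleGraph V) (a b : V) :
    ncomp (G.deleteEdges {s(a,b)}) ≤ ncomp G + 1 := by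
  classical
  set G' := G.deleteEdges {s(a,b)} with hG'
  have hle : ∀ u v, G'.Reachable u v → G.Reachable u v :=
    fun u v h => h.mono (deleteEdges_le _)
  have key : ∀ C : G'.ConnectedComponent, C ≠ G'.connectedComponentMk b →
      ∀ C' : G'.ConnectedComponent, C' ≠ G'.connectedComponentMk b →
      cmap hle C = cmap hle C' → C = C' := by
    intro C hC C' hC' hcc
    obtain ⟨u, rfl⟩ := C.exists_rep
    obtain ⟨v, rfl⟩ := C'.exists_rep
    change G.connectedComponentMk u = G.connectedComponentMk v at hcc
    have hr : G.Reachable u v := ConnectedComponent.eq.mp hcc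
    rcases reachable_deleteEdges_cases (a := a) (b := b) hr with h1 | ⟨h2a, h2b⟩ | ⟨h3a, h3b⟩
    · exact ConnectedComponent.eq.mpr h1
    · exact absurd (ConnectedComponent.eq.mpr h2b.symm) hC'
    · exact absurd (ConnectedComponent.eq.mpr h3a) hC
  have hinj : Nat.card G'.ConnectedComponent ≤ Nat.card (G.ConnectedComponent ⊕ Unit) := by
    apply Nat.card_le_card_of_injective
      (fun C => if C = G'.connectedComponentMk b then Sum.inr () else Sum.inl (cmap hle C))
    intro C C' h
    by_cases h1 : C = G'.connectedComponentMk b <;>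
      by_cases h2 : C' = G'.connectedComponentMk b
    · rw [h1, h2]
    · simp [h1, h2] at h
    · simp [h1, h2] at h
    · simp only [h1, h2, if_false, if_neg] at h
      simp only [if_neg h1, if_neg h2, Sum.inl.injEq] at h
      exact key C h1 C' h2 h
  simpa [ncomp, Nat.card_sum] using hinj

lemma ncomp_deleteEdge_eq {G : SimpleGraph V} {a b : V}
    (h : (G.deleteEdges {s(a,b)}).Reachable a b) :
    ncomp (G.deleteEdges {s(a,b)}) = ncomp G := by
  apply le_antisymm
  · apply ncomp_le_of_reachable_imp
    intro u v hr
    rcases reachable_deleteEdges_cases (a := a) (b := b) hr with h1 | ⟨h2a, h2b⟩ | ⟨h3a, h3b⟩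
    · exact h1
    · exact h2a.trans (h.trans h2b)
    · exact h3a.trans (h.symm.trans h3b)
  · exact ncomp_le_of_reachable_imp (fun u v hr => hr.mono (deleteEdges_le _))

lemma ncomp_deleteEdge_lt {G : SimpleGraph V} {a b : V} (hadj : G.Adj a b)
    (h : ¬ (G.deleteEdges {s(a,b)}).Reachable a b) :
    ncomp G < ncomp (G.deleteEdges {s(a,b)}) :=
  ncomp_lt_of_reachable_imp (fun u v hr => hr.mono (deleteEdges_le _)) h hadj.reachable

lemma card_le_ncard_add_ncomp (G : SimpleGraph V) :
    Fintype.card V ≤ G.edgeSet.ncard + ncomp G := by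
  classical
  generalize hn : G.edgeSet.ncard = n
  induction n using Nat.strong_induction_on generalizing G with
  | _ n ih =>
    rcases Set.eq_empty_or_nonempty G.edgeSet with he | hne
    · rw [edgeSet_eq_empty.mp he]
      simp [ncomp_bot]
    · obtain ⟨a, b, he⟩ : ∃ a b, s(a,b) ∈ G.edgeSet := Sym2.exists.mp hne
      have hcard : (G.deleteEdges {s(a,b)}).edgeSet.ncard + 1 = n := by
        rw [edgeSet_deleteEdges, ← hn]
        exact Set.ncard_diff_singleton_add_one he (Set.toFinite _)
      have h1 := ih (n - 1) (by omega) (G.deleteEdges {s(a,b)}) (by omega)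
      have h2 := ncomp_deleteEdge_le G a b
      omega

lemma acyclic_ncard_add_ncomp {G : SimpleGraph V} (hG : G.IsAcyclic) :
    G.edgeSet.ncard + ncomp G = Fintype.card V := by
  classical
  generalize hn : G.edgeSet.ncard = n
  induction n using Nat.strong_induction_on generalizing G with
  | _ n ih =>
    rcases Set.eq_empty_or_nonempty G.edgeSet with he | hne
    · have h0 : n = 0 := by rw [← hn, he, Set.ncard_empty]
      rw [edgeSet_eq_empty.mp he]
      simp [ncomp_bot, h0]
    · obtain ⟨a, b, he⟩ : ∃ a b, s(a,b) ∈ G.edgeSet := Sym2.exists.mp hne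
      have hadj : G.Adj a b := (G.mem_edgeSet).mp he
      have hbr : G.IsBridge s(a,b) := isAcyclic_iff_forall_adj_isBridge.mp hG hadj
      have hnr : ¬ (G.deleteEdges {s(a,b)}).Reachable a b := isBridge_iff.mp hbr
      have hcard : (G.deleteEdges {s(a,b)}).edgeSet.ncard + 1 = n := by
        rw [edgeSet_deleteEdges, ← hn]
        exact Set.ncard_diff_singleton_add_one he (Set.toFinite _)
      have hac : (G.deleteEdges {s(a,b)}).IsAcyclic := isAcyclic_mono (deleteEdges_le _) hG
      have h1 := ih (n - 1) (by omega) hac (by omega)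
      have h2 := ncomp_deleteEdge_le G a b
      have h3 := ncomp_deleteEdge_lt hadj hnr
      omega

lemma isAcyclic_of_ncard_add_ncomp_le {G : SimpleGraph V}
    (h : G.edgeSet.ncard + ncomp G ≤ Fintype.card V) : G.IsAcyclic := by
  by_contra hna
  rw [isAcyclic_iff_forall_adj_isBridge] at hna
  push_neg at hna
  obtain ⟨a, b, hadj, hnb⟩ := hna
  rw [isBridge_iff] at hnb
  have hr : (G.deleteEdges {s(a,b)}).Reachable a b := not_not.mp hnb
  have h1 := card_le_ncard_add_ncomp (G.deleteEdges {s(a,b)})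
  have h2 : ncomp (G.deleteEdges {s(a,b)}) = ncomp G := ncomp_deleteEdge_eq hr
  have h3 : (G.deleteEdges {s(a,b)}).edgeSet.ncard + 1 = G.edgeSet.ncard := by
    rw [edgeSet_deleteEdges]
    exact Set.ncard_diff_singleton_add_one (G.mem_edgeSet.mpr hadj) (Set.toFinite _)
  omega

set_option linter.unusedSectionVars false

lemma reachable_of_walk_edges {G H : SimpleGraph V} {u v : V} (p : G.Walk u v)
    (h : ∀ a b, s(a,b) ∈ p.edges → H.Reachable a b) : H.Reachable u v := by
  induction p with
  | nil => exact Reachable.refl _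
  | @cons u w v hadj p ih =>
    exact (h u w (by simp)).trans (ih (fun a b hab => h a b (by simp [hab])))

lemma reachable_endpoints_of_swap {G H : SimpleGraph V} {x y u v : V} (p : G.Walk x y)
    (hnd : p.edges.Nodup) (huv : s(u,v) ∈ p.edges) (hxy : H.Reachable x y)
    (hoth : ∀ a b, s(a,b) ∈ p.edges → s(a,b) ≠ s(u,v) → H.Reachable a b) :
    H.Reachable u v := by
  induction p with
  | nil => simp at huv
  | @cons x w y hadj p ih =>
    rw [Walk.edges_cons, List.mem_cons] at huv
    rw [Walk.edges_cons, List.nodup_cons] at hnd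
    rcases huv with heq | hmem
    · have hwy : H.Reachable w y := reachable_of_walk_edges p
        (fun a b hab => hoth a b (by simp [hab])
          (fun hc => hnd.1 (by rw [← heq, ← hc]; exact hab)))
      have hxw : H.Reachable x w := hxy.trans hwy.symm
      rcases Sym2.eq_iff.mp heq.symm with ⟨h1, h2⟩ | ⟨h1, h2⟩
      · rw [← h1, ← h2]; exact hxw
      · rw [← h1, ← h2]; exact hxw.symm
  -- careful: heq : s(u,v) = s(x,w); eq_iff on s(x,w)=s(u,v): gives (x=u ∧ w=v) ∨ (x=v ∧ w=u)
    · have hxw : H.Reachable x w := hoth x w (by simp)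
        (fun hc => hnd.1 (by rw [hc]; exact hmem))
      exact ih hnd.2 hmem (hxw.symm.trans hxy)
        (fun a b hab hne => hoth a b (by simp [hab]) hne)

lemma isAcyclic_of_edgeSet_subsingleton {G : SimpleGraph V} (h : G.edgeSet.Subsingleton) :
    G.IsAcyclic := by
  intro v c hc
  have h3 := hc.three_le_length
  have hnd : c.edges.Nodup := hc.edges_nodup
  have hlen : c.edges.length = c.length := Walk.length_edges _
  have h2 : 2 ≤ c.edges.length := by omega
  have hne : c.edges[0]'(by omega) ≠ c.edges[1]'(by omega) :=
    fun hc' => absurd (hnd.getElem_inj_iff.mp hc') (by norm_num)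
  exact hne (h (c.edges_subset_edgeSet (List.getElem_mem _))
    (c.edges_subset_edgeSet (List.getElem_mem _)))

lemma ncard_add_one_le_of_acyclic_support {G : SimpleGraph V} (hG : G.IsAcyclic) {U : Set V}
    (hsupp : ∀ a b, G.Adj a b → a ∈ U) {u₀ : V} (hu₀ : u₀ ∈ U) :
    G.edgeSet.ncard + 1 ≤ U.ncard := by
  classical
  have hiso : ∀ v : V, v ∉ U → ∀ w, ¬ G.Adj v w := fun v hv w hadj => hv (hsupp v w hadj)
  have hreach : ∀ v w, v ∉ U → G.Reachable v w → v = w := by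
    intro v w hv hr
    obtain ⟨p⟩ := hr
    cases p with
    | nil => rfl
    | cons hadj _ => exact absurd hadj (hiso _ hv _)
  have hinj : Injective (Sum.elim (fun v : ↥(Uᶜ) => G.connectedComponentMk v.1)
      (fun _ : Unit => G.connectedComponentMk u₀)) := by
    rintro (⟨v, hv⟩ | ⟨⟩) (⟨w, hw⟩ | ⟨⟩) hvw <;> simp only [Sum.elim_inl, Sum.elim_inr] at hvw
    · simp only [Sum.inl.injEq, Subtype.mk.injEq]
      exact hreach _ _ hv (ConnectedComponent.eq.mp hvw)
    · exact absurd (hreach _ _ hv (ConnectedComponent.eq.mp hvw)) (fun hc => hv (hc ▸ hu₀))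
    · exact absurd (hreach _ _ hw (ConnectedComponent.eq.mp hvw.symm)) (fun hc => hw (hc ▸ hu₀))
    · rfl
  have hcard := Nat.card_le_card_of_injective _ hinj
  rw [Nat.card_sum, Nat.card_coe_set_eq] at hcard
  have hcompl := Set.ncard_add_ncard_compl U
  have heq := acyclic_ncard_add_ncomp hG
  have : Nat.card V = Fintype.card V := Nat.card_eq_fintype_card
  simp only [Nat.card_unique] at hcard
  change _ ≤ ncomp G at hcard
  omega

lemma ncard_le_of_connects {G : SimpleGraph V} {U : Set V} {u₀ : V} (hu₀ : u₀ ∈ U)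
    (hconn : ∀ u ∈ U, G.Reachable u₀ u) :
    U.ncard ≤ G.edgeSet.ncard + 1 := by
  classical
  have hsurj : Surjective (Sum.elim (fun v : ↥(Uᶜ) => G.connectedComponentMk v.1)
      (fun _ : Unit => G.connectedComponentMk u₀)) := by
    intro C; obtain ⟨v, rfl⟩ := C.exists_rep
    by_cases hv : v ∈ U
    · exact ⟨Sum.inr (), ConnectedComponent.eq.mpr (hconn v hv)⟩
    · exact ⟨Sum.inl ⟨v, hv⟩, rfl⟩
  have hcard := Nat.card_le_card_of_surjective _ hsurj
  rw [Nat.card_sum, Nat.card_coe_set_eq] at hcard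
  simp only [Nat.card_unique] at hcard
  change ncomp G ≤ _ at hcard
  have hP1 := card_le_ncard_add_ncomp G
  have hcompl := Set.ncard_add_ncard_compl U
  have : Nat.card V = Fintype.card V := Nat.card_eq_fintype_card
  omega

set_option linter.unusedSectionVars false


lemma edgeSet_fromEdgeSet_of_subset {G : SimpleGraph V} {s : Set (Sym2 V)}
    (h : s ⊆ G.edgeSet) : (fromEdgeSet s).edgeSet = s := by
  rw [edgeSet_fromEdgeSet]
  ext e
  simp only [Set.mem_diff, Set.mem_setOf_eq]
  exact ⟨fun h1 => h1.1, fun he => ⟨he, G.not_isDiag_of_mem_edgeSet (h he)⟩⟩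

lemma fromEdgeSet_le_of_subset {G : SimpleGraph V} {s : Set (Sym2 V)}
    (h : s ⊆ G.edgeSet) : fromEdgeSet s ≤ G := by
  intro a b hab
  rw [fromEdgeSet_adj] at hab
  exact (G.mem_edgeSet).mp (h hab.1)

lemma ncard_le_sum {k : ℕ} (R : Set (Sym2 V)) (A : Fin k → Set (Sym2 V))
    (h : R ⊆ ⋃ i, A i) : R.ncard ≤ ∑ i, (A i).ncard := by
  classical
  have hR : R.Finite := Set.toFinite R
  have hA : ∀ i, (A i).Finite := fun i => Set.toFinite _
  rw [Set.ncard_eq_toFinset_card R hR]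
  have hsub : hR.toFinset ⊆ Finset.univ.biUnion (fun i => (hA i).toFinset) := by
    intro e he
    rw [Set.Finite.mem_toFinset] at he
    obtain ⟨_, ⟨i, rfl⟩, hi⟩ := h he
    exact Finset.mem_biUnion.mpr ⟨i, Finset.mem_univ _, (Set.Finite.mem_toFinset _).mpr hi⟩
  calc hR.toFinset.card ≤ _ := Finset.card_le_card hsub
    _ ≤ ∑ i, (hA i).toFinset.card := Finset.card_biUnion_le
    _ = ∑ i, (A i).ncard := by
        refine Finset.sum_congr rfl (fun i _ => ?_)
        rw [Set.ncard_eq_toFinset_card _ (hA i)]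

lemma sum_ncard_le {k : ℕ} (A : Fin k → Set (Sym2 V)) (B : Set (Sym2 V))
    (hsub : ∀ i, A i ⊆ B) (hdisj : Pairwise fun i j => Disjoint (A i) (A j)) :
    ∑ i, (A i).ncard ≤ B.ncard := by
  classical
  have hA : ∀ i, (A i).Finite := fun i => Set.toFinite _
  have hB : B.Finite := Set.toFinite _
  have hcard : ∑ i, (A i).ncard = (Finset.univ.biUnion (fun i => (hA i).toFinset)).card := by
    rw [Finset.card_biUnion]
    · exact Finset.sum_congr rfl (fun i _ => (Set.ncard_eq_toFinset_card _ (hA i)))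
    · intro i _ j _ hij
      have := hdisj hij
      rw [Function.onFun, Finset.disjoint_left]
      intro e hei hej
      rw [Set.Finite.mem_toFinset] at hei hej
      exact (Set.disjoint_left.mp this) hei hej
  rw [hcard, Set.ncard_eq_toFinset_card B hB]
  apply Finset.card_le_card
  intro e he
  obtain ⟨i, _, hei⟩ := Finset.mem_biUnion.mp he
  rw [Set.Finite.mem_toFinset] at hei ⊢
  exact hsub i hei

lemma cast_sub_one {n : ℕ} (h2 : 2 ≤ n) : ((n - 1 : ℕ) : ℚ) = (n : ℚ) - 1 := by
  have : (1:ℕ) ≤ n := by omega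
  push_cast [Nat.cast_sub this]
  ring

lemma denom_pos {n : ℕ} (h2 : 2 ≤ n) : (0:ℚ) < (n:ℚ) - 1 := by
  have : (2:ℚ) ≤ (n:ℚ) := by exact_mod_cast h2
  linarith

lemma ceil_le_of_le {m n A : ℕ} (h2 : 2 ≤ n) (h : m ≤ A * (n - 1)) :
    ⌈(m:ℚ)/((n:ℚ)-1)⌉ ≤ (A:ℤ) := by
  rw [Int.ceil_le, div_le_iff₀ (denom_pos h2)]
  have h' : (m:ℚ) ≤ (A:ℚ) * ((n-1:ℕ):ℚ) := by exact_mod_cast h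
  rw [cast_sub_one h2] at h'
  push_cast
  linarith

lemma le_of_ceil_le {m n A : ℕ} (h2 : 2 ≤ n) (h : ⌈(m:ℚ)/((n:ℚ)-1)⌉ ≤ (A:ℤ)) :
    m ≤ A * (n - 1) := by
  rw [Int.ceil_le, div_le_iff₀ (denom_pos h2)] at h
  push_cast at h
  rw [← cast_sub_one h2] at h
  exact_mod_cast h

/-- The set of achievable values in the Nash-Williams formula. -/
def SS (G : SimpleGraph V) : Set ℕ := {t : ℕ | ∃ H : G.Subgraph, 2 ≤ H.verts.ncard ∧
      (t : ℤ) = ⌈(H.edgeSet.ncard : ℚ) / ((H.verts.ncard : ℚ) - 1)⌉}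

def DD (G : SimpleGraph V) : Set ℕ := {t | ∃ F : Fin t → SimpleGraph V,
    (∀ i, F i ≤ G ∧ (F i).IsAcyclic) ∧
    (Pairwise fun i j => Disjoint (F i).edgeSet (F j).edgeSet) ∧
    (⋃ i, (F i).edgeSet) = G.edgeSet}

lemma DD_nonempty (G : SimpleGraph V) : (DD G).Nonempty := by
  classical
  letI : Fintype ↥G.edgeSet := Fintype.ofFinite _
  refine ⟨Fintype.card ↥G.edgeSet, fun j => fromEdgeSet {((Fintype.equivFin ↥G.edgeSet).symm j : Sym2 V)}, ?_, ?_, ?_⟩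
  · intro i
    constructor
    · exact fromEdgeSet_le_of_subset (by
        intro e he
        rw [Set.mem_singleton_iff] at he
        rw [he]
        exact Subtype.mem _)
    · exact isAcyclic_of_edgeSet_subsingleton (by
        intro e he f hf
        rw [edgeSet_fromEdgeSet] at he hf
        rw [Set.mem_singleton_iff.mp he.1, Set.mem_singleton_iff.mp hf.1])
  · intro i j hij
    rw [Set.disjoint_left]
    intro e hei hej
    rw [edgeSet_fromEdgeSet] at hei hej
    have h1 := Set.mem_singleton_iff.mp hei.1
    have h2 := Set.mem_singleton_iff.mp hej.1
    apply hij
    have := h1 ▸ h2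
    exact (Fintype.equivFin ↥G.edgeSet).symm.injective (Subtype.coe_injective (h2 ▸ h1)) |>.symm ▸ rfl
  · ext e
    simp only [Set.mem_iUnion, edgeSet_fromEdgeSet, Set.mem_diff, Set.mem_singleton_iff]
    constructor
    · rintro ⟨i, he, -⟩
      rw [he]; exact Subtype.mem _
    · intro he
      exact ⟨Fintype.equivFin ↥G.edgeSet ⟨e, he⟩, by simp, G.not_isDiag_of_mem_edgeSet he⟩

lemma one_mem_SS (G : SimpleGraph V) (hG : G.edgeSet.Nonempty) : 1 ∈ SS G := by
  obtain ⟨x, y, he⟩ : ∃ a b, s(a,b) ∈ G.edgeSet := Sym2.exists.mp hG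
  have hadj : G.Adj x y := (G.mem_edgeSet).mp he
  refine ⟨G.subgraphOfAdj hadj, ?_, ?_⟩
  · have hv : (G.subgraphOfAdj hadj).verts = {x, y} := rfl
    rw [hv, Set.ncard_pair hadj.ne]
  · have hv : (G.subgraphOfAdj hadj).verts = {x, y} := rfl
    have hedge : (G.subgraphOfAdj hadj).edgeSet = {s(x,y)} := by
      ext e
      refine e.ind (fun a b => ?_)
      rw [Subgraph.mem_edgeSet, subgraphOfAdj_adj, Set.mem_singleton_iff]
      exact ⟨fun h => h.symm, fun h => h.symm⟩
    rw [hv, hedge, Set.ncard_pair hadj.ne, Set.ncard_singleton]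
    norm_num

lemma mem_SS_le {G : SimpleGraph V} {t A : ℕ} (ht : t ∈ SS G) (hA : A ∈ DD G) : t ≤ A := by
  obtain ⟨H, h2, heq⟩ := ht
  obtain ⟨F, hF1, hF2, hF3⟩ := hA
  set n := H.verts.ncard
  have hm : H.edgeSet.ncard ≤ A * (n - 1) := by
    have hsub : H.edgeSet ⊆ ⋃ i, (H.edgeSet ∩ (F i).edgeSet) := by
      intro e he
      have heG : e ∈ G.edgeSet := H.edgeSet_subset he
      rw [← hF3] at heG
      obtain ⟨_, ⟨i, rfl⟩, hi⟩ := heG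
      exact Set.mem_iUnion.mpr ⟨i, he, hi⟩
    calc H.edgeSet.ncard ≤ ∑ i, (H.edgeSet ∩ (F i).edgeSet).ncard := ncard_le_sum _ _ hsub
      _ ≤ ∑ _i : Fin A, (n - 1) := by
          refine Finset.sum_le_sum (fun i _ => ?_)
          have hKle : fromEdgeSet (H.edgeSet ∩ (F i).edgeSet) ≤ F i :=
            fromEdgeSet_le_of_subset (fun e he => he.2)
          have hKac : (fromEdgeSet (H.edgeSet ∩ (F i).edgeSet)).IsAcyclic :=
            isAcyclic_mono hKle (hF1 i).2
          have hKedge : (fromEdgeSet (H.edgeSet ∩ (F i).edgeSet)).edgeSet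
              = H.edgeSet ∩ (F i).edgeSet :=
            edgeSet_fromEdgeSet_of_subset (fun e he => H.edgeSet_subset he.1)
          obtain ⟨u₀, hu₀⟩ : H.verts.Nonempty := Set.nonempty_of_ncard_ne_zero (by omega)
          have := ncard_add_one_le_of_acyclic_support hKac (U := H.verts) ?_ hu₀
          · rw [hKedge] at this; omega
          · intro a b hab
            rw [fromEdgeSet_adj] at hab
            exact ((Subgraph.mem_edgeSet).mp hab.1.1).fst_mem
      _ = A * (n - 1) := by simp [Finset.sum_const, mul_comm]
  have : (t : ℤ) ≤ (A : ℤ) := heq ▸ ceil_le_of_le h2 hm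
  exact_mod_cast this

set_option linter.unusedSectionVars false
set_option maxHeartbeats 1000000

/-- one exchange step: `g` lies on the fundamental path (in forest `i`) of `f`,
where `f` is not an edge of forest `i` but its endpoints are joined in it. -/
def StepAt {k : ℕ} (F : Fin k → SimpleGraph V) (i : Fin k) (f g : Sym2 V) : Prop :=
  ∃ (x y : V) (p : (F i).Walk x y),
    f = s(x,y) ∧ f ∉ (F i).edgeSet ∧ p.IsPath ∧ g ∈ p.edges

def Reach {k : ℕ} (F : Fin k → SimpleGraph V) (e : Sym2 V) : ℕ → Sym2 V → Prop
  | 0 => fun f => f = e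
  | n+1 => fun f => Reach F e n f ∨ ∃ g i, Reach F e n g ∧ StepAt F i g f

variable {k : ℕ} {F : Fin k → SimpleGraph V} {e : Sym2 V}

lemma reach_zero : Reach F e 0 e := rfl

lemma reach_succ_of {n : ℕ} {f : Sym2 V} (h : Reach F e n f) : Reach F e (n+1) f := Or.inl h

noncomputable def depth (F : Fin k → SimpleGraph V) (e : Sym2 V) (f : Sym2 V) : ℕ :=
  sInf {n | Reach F e n f}

lemma depth_le {n : ℕ} {f : Sym2 V} (h : Reach F e n f) : depth F e f ≤ n :=
  Nat.sInf_le h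

lemma reach_depth {f : Sym2 V} (h : ∃ n, Reach F e n f) : Reach F e (depth F e f) f :=
  Nat.sInf_mem h

lemma reach_mem_edgeSet {G : SimpleGraph V} (hFG : ∀ i, F i ≤ G) (he : e ∈ G.edgeSet) :
    ∀ n f, Reach F e n f → f ∈ G.edgeSet := by
  intro n
  induction n with
  | zero => intro f hf; rw [show f = e from hf]; exact he
  | succ n ih =>
    rintro f (hf | ⟨g, i, _, x, y, p, _, _, _, hmem⟩)
    · exact ih f hf
    · exact edgeSet_mono (hFG i) (p.edges_subset_edgeSet hmem)

lemma exists_chain (hk : 0 < k) {f : Sym2 V} {n : ℕ}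
    (hn : depth F e f = n) (hr : Reach F e n f) :
    ∃ (ff : ℕ → Sym2 V) (ii : ℕ → Fin k),
      ff 0 = e ∧ ff n = f ∧
      (∀ l, 1 ≤ l → l ≤ n → StepAt F (ii l) (ff (l-1)) (ff l)) ∧
      (∀ l, l ≤ n → depth F e (ff l) = l) ∧
      (∀ l, l ≤ n → Reach F e l (ff l)) := by
  induction n generalizing f with
  | zero =>
    refine ⟨fun _ => e, fun _ => ⟨0, hk⟩, rfl, (show f = e from hr).symm, ?_, ?_, ?_⟩
    · intro l h1 h2; omega
    · intro l hl
      have : l = 0 := by omega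
      rw [this]
      rw [(show f = e from hr)] at hn
      rw [← hn]
    · intro l hl
      have : l = 0 := by omega
      rw [this]; exact reach_zero
  | succ n ih =>
    rcases hr with hr' | ⟨g, i, hg, hstep⟩
    · exact absurd (depth_le hr') (by omega)
    · have hdg : depth F e g = n := by
        refine le_antisymm (depth_le hg) ?_
        by_contra hlt
        push_neg at hlt
        have : Reach F e (depth F e g) g := reach_depth ⟨n, hg⟩
        have h2 : Reach F e (depth F e g + 1) f := Or.inr ⟨g, i, this, hstep⟩
        have := depth_le h2
        omega
      obtain ⟨ff, ii, h0, hnn, hst, hdep, hre⟩ := ih hdg (hdg ▸ reach_depth ⟨n, hg⟩)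
      refine ⟨fun l => if l = n+1 then f else ff l, fun l => if l = n+1 then i else ii l,
        ?_, ?_, ?_, ?_, ?_⟩
      · simp [h0]
      · simp
      · intro l h1 h2
        beta_reduce
        rcases Nat.lt_or_ge l (n+1) with hl | hl
        · have e1 : (if l = n+1 then f else ff l) = ff l := by
            rw [if_neg (by omega)]
          have e2 : (if l - 1 = n+1 then f else ff (l-1)) = ff (l-1) := by
            rw [if_neg (by omega)]
          have e3 : (if l = n+1 then i else ii l) = ii l := by
            rw [if_neg (by omega)]
          rw [e1, e2, e3]
          exact hst l h1 (by omega)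
        · have hl' : l = n + 1 := by omega
          subst hl'
          have e1 : (if n+1 = n+1 then f else ff (n+1)) = f := by rw [if_pos rfl]
          have e2 : (if n+1-1 = n+1 then f else ff (n+1-1)) = ff n := by
            rw [if_neg (by omega)]; norm_num
          have e3 : (if n+1 = n+1 then i else ii (n+1)) = i := by rw [if_pos rfl]
          rw [e1, e2, e3, hnn]
          exact hstep
      · intro l hl
        beta_reduce
        rcases Nat.lt_or_ge l (n+1) with h | h
        · rw [if_neg (by omega)]; exact hdep l (by omega)
        · have : l = n+1 := by omega
          subst this
          rw [if_pos rfl]; exact hn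
      · intro l hl
        beta_reduce
        rcases Nat.lt_or_ge l (n+1) with h | h
        · rw [if_neg (by omega)]; exact hre l (by omega)
        · have : l = n+1 := by omega
          subst this
          rw [if_pos rfl]
          exact Or.inr ⟨g, i, hg, hstep⟩

set_option linter.unusedSectionVars false
set_option maxHeartbeats 1600000


lemma reachable_of_sym2_eq {H : SimpleGraph V} {a b x y : V} (h : s(a,b) = s(x,y))
    (hr : H.Reachable x y) : H.Reachable a b := by
  rcases Sym2.eq_iff.mp h with ⟨rfl, rfl⟩ | ⟨rfl, rfl⟩
  · exact hr
  · exact hr.symm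

lemma augment (G : SimpleGraph V) (hk : 0 < k)
    (hFG : ∀ i, F i ≤ G) (hFac : ∀ i, (F i).IsAcyclic)
    (hdisj : Pairwise fun i j => Disjoint (F i).edgeSet (F j).edgeSet)
    (he : e ∈ G.edgeSet) (hecov : ∀ i, e ∉ (F i).edgeSet)
    {fstar : Sym2 V} (hrs : ∃ n, Reach F e n fstar)
    (istar : Fin k) (xs ys : V) (hfs : fstar = s(xs,ys))
    (hnotin : fstar ∉ (F istar).edgeSet) (hnr : ¬ (F istar).Reachable xs ys) :
    ∃ F' : Fin k → SimpleGraph V,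
      (∀ i, F' i ≤ G) ∧ (∀ i, (F' i).IsAcyclic) ∧
      (Pairwise fun i j => Disjoint (F' i).edgeSet (F' j).edgeSet) ∧
      insert e (⋃ i, (F i).edgeSet) ⊆ ⋃ i, (F' i).edgeSet := by
  classical
  obtain ⟨ff, ii, hff0, hffn, hstepall, hdep, hre⟩ :=
    exists_chain (n := depth F e fstar) hk rfl (reach_depth hrs)
  set n := depth F e fstar with hdn
  choose xx yy pp hxy hnin hpath hmem using hstepall
  have hinj : ∀ l m, l ≤ n → m ≤ n → ff l = ff m → l = m := by
    intro l m hl hm hfm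
    rw [← hdep l hl, ← hdep m hm, hfm]
  have hmemF : ∀ l (h1 : 1 ≤ l) (h2 : l ≤ n), ff l ∈ (F (ii l)).edgeSet :=
    fun l h1 h2 => (pp l h1 h2).edges_subset_edgeSet (hmem l h1 h2)
  have hmemG : ∀ l, l ≤ n → ff l ∈ G.edgeSet := by
    intro l hl
    exact reach_mem_edgeSet hFG he l (ff l) (hre l hl)
  have hnotF : ∀ l (h1 : 1 ≤ l) (h2 : l ≤ n) j, j ≠ ii l → ff l ∉ (F j).edgeSet := by
    intro l h1 h2 j hj hmem'
    exact (Set.disjoint_left.mp (hdisj hj)) hmem' (hmemF l h1 h2)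
  have hff0F : ∀ j, ff 0 ∉ (F j).edgeSet := by intro j; rw [hff0]; exact hecov j
  have hkey : ∀ l (h1 : 1 ≤ l) (h2 : l ≤ n) m, 1 ≤ m → m ≤ n →
      ff m ∈ (pp l h1 h2).edges → m ≤ l := by
    intro l h1 h2 m hm1 hm2 hmm
    have hr1 : Reach F e (l-1) (ff (l-1)) := hre (l-1) (by omega)
    have hr2 : Reach F e ((l-1)+1) (ff m) :=
      Or.inr ⟨ff (l-1), ii l, hr1,
        ⟨xx l h1 h2, yy l h1 h2, pp l h1 h2, hxy l h1 h2, hnin l h1 h2, hpath l h1 h2, hmm⟩⟩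
    have := depth_le hr2
    rw [hdep m hm2] at this
    omega
  set Y : Fin k → Set (Sym2 V) :=
    fun i => {g | ∃ l, 1 ≤ l ∧ l ≤ n ∧ ii l = i ∧ g = ff l} with hY
  set X : Fin k → Set (Sym2 V) :=
    fun i => {g | ∃ l, 1 ≤ l ∧ l ≤ n ∧ ii l = i ∧ g = ff (l-1)} with hX
  set F2 : Fin k → SimpleGraph V :=
    fun i => fromEdgeSet (((F i).edgeSet \ Y i) ∪ X i) with hF2
  have hYsub : ∀ i, Y i ⊆ (F i).edgeSet := by
    rintro i g ⟨l, h1, h2, hil, rfl⟩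
    rw [← hil]; exact hmemF l h1 h2
  have hE2sub : ∀ i, ((F i).edgeSet \ Y i) ∪ X i ⊆ G.edgeSet := by
    rintro i g (⟨hg, -⟩ | ⟨l, h1, h2, hil, rfl⟩)
    · exact edgeSet_mono (hFG i) hg
    · exact hmemG (l-1) (by omega)
  have hedge2 : ∀ i, (F2 i).edgeSet = ((F i).edgeSet \ Y i) ∪ X i :=
    fun i => edgeSet_fromEdgeSet_of_subset (hE2sub i)
  have hXF : ∀ i g, g ∈ X i → g ∉ (F i).edgeSet := by
    rintro i g ⟨l, h1, h2, hil, rfl⟩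
    rw [← hil]; exact hnin l h1 h2
  -- the reachability compensation for removed edges
  have hS : ∀ l, l ≤ n → ∀ (h1 : 1 ≤ l) (a b : V), ff l = s(a,b) →
      (F2 (ii l)).Reachable a b := by
    intro l
    induction l using Nat.strong_induction_on with
    | _ l ihl =>
      intro h2 h1 a b hab
      refine reachable_endpoints_of_swap (pp l h1 h2) (hpath l h1 h2).edges_nodup
        (hab ▸ hmem l h1 h2) ?_ ?_
      · have hadj : (F2 (ii l)).Adj (xx l h1 h2) (yy l h1 h2) := by
          rw [← mem_edgeSet, hedge2]
          exact Or.inr ⟨l, h1, h2, rfl, (hxy l h1 h2).symm⟩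
        exact hadj.reachable
      · intro c d hcd hne
        have hcdF : s(c,d) ∈ (F (ii l)).edgeSet := (pp l h1 h2).edges_subset_edgeSet hcd
        by_cases hYm : s(c,d) ∈ Y (ii l)
        · obtain ⟨m, hm1, hm2, him, hcdm⟩ := hYm
          have hml : m ≤ l := hkey l h1 h2 m hm1 hm2 (by rw [← hcdm]; exact hcd)
          have hmlt : m < l := by
            rcases Nat.eq_or_lt_of_le hml with rfl | h
            · exact absurd (hcdm.trans hab) hne
            · exact h
          have := ihl m hmlt hm2 hm1 c d hcdm.symm
          rwa [him] at this
        · have hmm : s(c,d) ∈ (F2 (ii l)).edgeSet := by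
            rw [hedge2]; exact Or.inl ⟨hcdF, hYm⟩
          exact ((F2 (ii l)).mem_edgeSet.mp hmm).reachable
  have hconn1 : ∀ i u v, (F2 i).Reachable u v → (F i).Reachable u v := by
    intro i u v hr
    obtain ⟨p⟩ := hr
    apply reachable_of_walk_edges p
    intro a b hab
    have hab2 : s(a,b) ∈ (F2 i).edgeSet := p.edges_subset_edgeSet hab
    rw [hedge2] at hab2
    rcases hab2 with ⟨hmemi, -⟩ | ⟨l, h1, h2, hil, habl⟩
    · exact ((F i).mem_edgeSet.mp hmemi).reachable
    · refine reachable_of_sym2_eq (habl.trans (hxy l h1 h2)) ?_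
      rw [← hil]
      exact ⟨pp l h1 h2⟩
  have hconn2 : ∀ i u v, (F i).Reachable u v → (F2 i).Reachable u v := by
    intro i u v hr
    obtain ⟨p⟩ := hr
    apply reachable_of_walk_edges p
    intro a b hab
    have habF : s(a,b) ∈ (F i).edgeSet := p.edges_subset_edgeSet hab
    by_cases hYm : s(a,b) ∈ Y i
    · obtain ⟨l, h1, h2, hil, habl⟩ := hYm
      have := hS l h2 h1 a b habl.symm
      rwa [hil] at this
    · have hmm : s(a,b) ∈ (F2 i).edgeSet := by
        rw [hedge2]; exact Or.inl ⟨habF, hYm⟩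
      exact ((F2 i).mem_edgeSet.mp hmm).reachable
  have hncomp : ∀ i, ncomp (F2 i) = ncomp (F i) := fun i =>
    le_antisymm (ncomp_le_of_reachable_imp (hconn2 i)) (ncomp_le_of_reachable_imp (hconn1 i))
  have hcard2 : ∀ i, (F2 i).edgeSet.ncard = (F i).edgeSet.ncard := by
    intro i
    rw [hedge2]
    set L : Set ℕ := {l | 1 ≤ l ∧ l ≤ n ∧ ii l = i} with hL
    have hYim : Y i = ff '' L := by
      ext g
      constructor
      · rintro ⟨l, h1, h2, hil, rfl⟩; exact ⟨l, ⟨h1, h2, hil⟩, rfl⟩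
      · rintro ⟨l, ⟨h1, h2, hil⟩, rfl⟩; exact ⟨l, h1, h2, hil, rfl⟩
    have hXim : X i = (fun l => ff (l-1)) '' L := by
      ext g
      constructor
      · rintro ⟨l, h1, h2, hil, rfl⟩; exact ⟨l, ⟨h1, h2, hil⟩, rfl⟩
      · rintro ⟨l, ⟨h1, h2, hil⟩, rfl⟩; exact ⟨l, h1, h2, hil, rfl⟩
    have hYcard : (Y i).ncard = L.ncard := by
      rw [hYim]
      exact Set.ncard_image_of_injOn (fun l hl m hm hfm => hinj l m hl.2.1 hm.2.1 hfm)
    have hXcard : (X i).ncard = L.ncard := by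
      rw [hXim]
      refine Set.ncard_image_of_injOn (fun l hl m hm hfm => ?_)
      obtain ⟨hl1, hl2, -⟩ := hl
      obtain ⟨hm1, hm2, -⟩ := hm
      have := hinj (l-1) (m-1) (by omega) (by omega) hfm
      omega
    have hdisjXY : Disjoint ((F i).edgeSet \ Y i) (X i) :=
      Set.disjoint_right.mpr (fun g hg hgd => hXF i g hg hgd.1)
    rw [Set.ncard_union_eq hdisjXY (Set.toFinite _) (Set.toFinite _), hXcard]
    have hdisj2 : Disjoint ((F i).edgeSet \ Y i) (Y i) :=
      Set.disjoint_right.mpr (fun g hg hgd => hgd.2 hg)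
    have h3 : ((F i).edgeSet \ Y i).ncard + (Y i).ncard = (F i).edgeSet.ncard := by
      rw [← Set.ncard_union_eq hdisj2 (Set.toFinite _) (Set.toFinite _),
        Set.diff_union_of_subset (hYsub i)]
    omega
  have hac2 : ∀ i, (F2 i).IsAcyclic := by
    intro i
    refine isAcyclic_of_ncard_add_ncomp_le (le_of_eq ?_)
    rw [hcard2 i, hncomp i, acyclic_ncard_add_ncomp (hFac i)]
  -- the star forest
  set Fs : SimpleGraph V := F2 istar ⊔ fromEdgeSet {fstar} with hFs
  have hfsmemG : fstar ∈ G.edgeSet := by rw [← hffn]; exact hmemG n le_rfl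
  have hfsG : ({fstar} : Set (Sym2 V)) ⊆ G.edgeSet := by
    intro g hg; rw [Set.mem_singleton_iff] at hg; rw [hg]; exact hfsmemG
  have hedgeS : Fs.edgeSet = (F2 istar).edgeSet ∪ {fstar} := by
    rw [hFs, edgeSet_sup, edgeSet_fromEdgeSet_of_subset hfsG]
  have hfsnot2 : fstar ∉ (F2 istar).edgeSet := by
    rw [hedge2]
    rintro (⟨hmem', -⟩ | ⟨l, h1, h2, hil, hfl⟩)
    · exact hnotin hmem'
    · have := hinj n (l-1) le_rfl (by omega) (by rw [hffn, ← hfl])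
      omega
  have hcardS : Fs.edgeSet.ncard = (F istar).edgeSet.ncard + 1 := by
    rw [hedgeS, Set.union_singleton, Set.ncard_insert_of_notMem hfsnot2 (Set.toFinite _),
      hcard2]
  have hnrs2 : ¬ (F2 istar).Reachable xs ys := fun hc => hnr (hconn1 istar _ _ hc)
  have hrsS : Fs.Reachable xs ys := by
    have hadj : Fs.Adj xs ys := by
      rw [← mem_edgeSet, hedgeS]
      right
      rw [Set.mem_singleton_iff, ← hfs]
    exact hadj.reachable
  have hnS : ncomp Fs < ncomp (F2 istar) :=
    ncomp_lt_of_reachable_imp (fun u v h => h.mono le_sup_left) hnrs2 hrsS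
  have hacS : Fs.IsAcyclic := by
    refine isAcyclic_of_ncard_add_ncomp_le ?_
    have h1 := acyclic_ncard_add_ncomp (hFac istar)
    have h2 := hncomp istar
    rw [hcardS]
    omega
  -- the new family
  set F' : Fin k → SimpleGraph V := Function.update F2 istar Fs with hF'
  have hF'istar : F' istar = Fs := Function.update_self _ _ _
  have hF'ne : ∀ i, i ≠ istar → F' i = F2 i := fun i h => Function.update_of_ne h _ _
  have hedgeF' : ∀ i, (F' i).edgeSet =
      (((F i).edgeSet \ Y i) ∪ X i) ∪ (if i = istar then {fstar} else ∅) := by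
    intro i
    by_cases h : i = istar
    · rw [h, hF'istar, if_pos rfl, hedgeS, hedge2]
    · rw [hF'ne i h, if_neg h, hedge2, Set.union_empty]
  have hle' : ∀ i, F' i ≤ G := by
    intro i
    by_cases h : i = istar
    · rw [h, hF'istar, hFs]
      exact sup_le (fromEdgeSet_le_of_subset (hE2sub istar)) (fromEdgeSet_le_of_subset hfsG)
    · rw [hF'ne i h]
      exact fromEdgeSet_le_of_subset (hE2sub i)
  have hac' : ∀ i, (F' i).IsAcyclic := by
    intro i
    by_cases h : i = istar
    · rw [h, hF'istar]; exact hacS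
    · rw [hF'ne i h]; exact hac2 i
  have hmemcase : ∀ i g, g ∈ (F' i).edgeSet →
      (g ∈ (F i).edgeSet ∧ g ∉ Y i) ∨
      (∃ l, 1 ≤ l ∧ l ≤ n ∧ ii l = i ∧ g = ff (l-1)) ∨ (i = istar ∧ g = fstar) := by
    intro i g hg
    rw [hedgeF'] at hg
    rcases hg with (⟨h1, h2⟩ | hX') | hlast
    · exact Or.inl ⟨h1, h2⟩
    · exact Or.inr (Or.inl hX')
    · by_cases h : i = istar
      · rw [if_pos h] at hlast
        exact Or.inr (Or.inr ⟨h, Set.mem_singleton_iff.mp hlast⟩)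
      · rw [if_neg h] at hlast
        exact absurd hlast (Set.notMem_empty g)
  have hfeqn : fstar = ff n := hffn.symm
  have hAB : ∀ i j g, (g ∈ (F i).edgeSet ∧ g ∉ Y i) →
      (∃ l, 1 ≤ l ∧ l ≤ n ∧ ii l = j ∧ g = ff (l-1)) → False := by
    rintro i j g ⟨hgF, hgY⟩ ⟨l, h1, h2, hjl, rfl⟩
    rcases Nat.eq_or_lt_of_le h1 with h1' | h1'
    · have : l - 1 = 0 := by omega
      rw [this] at hgF
      exact hff0F i hgF
    · have hl1 : 1 ≤ l - 1 := by omega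
      have hl2 : l - 1 ≤ n := by omega
      by_cases hieq : i = ii (l-1)
      · exact hgY ⟨l - 1, hl1, hl2, hieq.symm, rfl⟩
      · exact hnotF (l-1) hl1 hl2 i hieq hgF
  have hAC : ∀ i g, (g ∈ (F i).edgeSet ∧ g ∉ Y i) → g = fstar → False := by
    rintro i g ⟨hgF, hgY⟩ hgf
    rw [hgf] at hgF hgY
    rcases Nat.eq_zero_or_pos n with h0 | hpos
    · have heq : fstar = e := by rw [hfeqn, h0, hff0]
      rw [heq] at hgF
      exact hecov i hgF
    · by_cases hieq : i = ii n
      · exact hgY ⟨n, hpos, le_rfl, hieq.symm, hfeqn⟩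
      · refine hnotF n hpos le_rfl i hieq ?_
        rw [← hfeqn]
        exact hgF
  have hBB : ∀ i j g, i ≠ j → (∃ l, 1 ≤ l ∧ l ≤ n ∧ ii l = i ∧ g = ff (l-1)) →
      (∃ l, 1 ≤ l ∧ l ≤ n ∧ ii l = j ∧ g = ff (l-1)) → False := by
    rintro i j g hij ⟨l, h1, h2, hil, rfl⟩ ⟨m, hm1, hm2, hjm, hgm⟩
    have := hinj (l-1) (m-1) (by omega) (by omega) hgm
    have : l = m := by omega
    subst this
    exact hij (hil.symm.trans hjm)
  have hBC : ∀ i g, (∃ l, 1 ≤ l ∧ l ≤ n ∧ ii l = i ∧ g = ff (l-1)) → g = fstar → False := by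
    rintro i g ⟨l, h1, h2, hil, rfl⟩ hgf
    have := hinj (l-1) n (by omega) le_rfl (by rw [hgf]; exact hfeqn)
    omega
  have hdisj' : Pairwise fun i j => Disjoint (F' i).edgeSet (F' j).edgeSet := by
    intro i j hij
    rw [Set.disjoint_left]
    intro g hgi hgj
    rcases hmemcase i g hgi with hAi | hBi | ⟨hi, hCi⟩ <;>
      rcases hmemcase j g hgj with hAj | hBj | ⟨hj, hCj⟩
    · exact Set.disjoint_left.mp (hdisj hij) hAi.1 hAj.1
    · exact hAB i j g hAi hBj
    · exact hAC i g hAi hCj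
    · exact hAB j i g hAj hBi
    · exact hBB i j g hij hBi hBj
    · exact hBC i g hBi hCj
    · exact hAC j g hAj hCi
    · exact hBC j g hBj hCi
    · exact hij (hi.trans hj.symm)
  have hcov : insert e (⋃ i, (F i).edgeSet) ⊆ ⋃ i, (F' i).edgeSet := by
    intro g hg
    rcases Set.mem_insert_iff.mp hg with rfl | hg
    · rcases Nat.eq_zero_or_pos n with h0 | hpos
      · refine Set.mem_iUnion.mpr ⟨istar, ?_⟩
        rw [hedgeF' istar, if_pos rfl]
        right
        rw [Set.mem_singleton_iff, hfeqn, h0, hff0]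
      · refine Set.mem_iUnion.mpr ⟨ii 1, ?_⟩
        rw [hedgeF']
        left; right
        exact ⟨1, le_rfl, hpos, rfl, by rw [hff0]⟩
    · obtain ⟨_, ⟨j, rfl⟩, hgj⟩ := hg
      by_cases hYj : g ∈ Y j
      · obtain ⟨l, h1, h2, hjl, rfl⟩ := hYj
        rcases Nat.lt_or_ge l n with hln | hln
        · refine Set.mem_iUnion.mpr ⟨ii (l+1), ?_⟩
          rw [hedgeF']
          left; right
          refine ⟨l+1, by omega, by omega, rfl, ?_⟩
          norm_num
        · have hl : l = n := by omega
          refine Set.mem_iUnion.mpr ⟨istar, ?_⟩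
          rw [hedgeF', if_pos rfl]
          right
          rw [Set.mem_singleton_iff, hl, hffn]
      · refine Set.mem_iUnion.mpr ⟨j, ?_⟩
        rw [hedgeF']
        left; left
        exact ⟨hgj, hYj⟩
  exact ⟨F', hle', hac', hdisj', hcov⟩

set_option linter.unusedSectionVars false
set_option maxHeartbeats 1600000

lemma exists_decomp (G : SimpleGraph V) (k : ℕ) (hk : 0 < k)
    (hdens : ∀ H : G.Subgraph, 2 ≤ H.verts.ncard →
      H.edgeSet.ncard ≤ k * (H.verts.ncard - 1)) :
    ∃ F : Fin k → SimpleGraph V,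
      (∀ i, F i ≤ G ∧ (F i).IsAcyclic) ∧
      (Pairwise fun i j => Disjoint (F i).edgeSet (F j).edgeSet) ∧
      (⋃ i, (F i).edgeSet) = G.edgeSet := by
  classical
  suffices h : ∀ m (F : Fin k → SimpleGraph V), (∀ i, F i ≤ G) → (∀ i, (F i).IsAcyclic) →
      (Pairwise fun i j => Disjoint (F i).edgeSet (F j).edgeSet) →
      (G.edgeSet \ ⋃ i, (F i).edgeSet).ncard ≤ m →
      ∃ F' : Fin k → SimpleGraph V, (∀ i, F' i ≤ G ∧ (F' i).IsAcyclic) ∧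
        (Pairwise fun i j => Disjoint (F' i).edgeSet (F' j).edgeSet) ∧
        (⋃ i, (F' i).edgeSet) = G.edgeSet by
    refine h (G.edgeSet \ ⋃ _i : Fin k, (⊥ : SimpleGraph V).edgeSet).ncard
      (fun _ => ⊥) (fun _ => bot_le) ?_ ?_ le_rfl
    · intro i
      exact isAcyclic_of_edgeSet_subsingleton
        (by rw [edgeSet_bot]; exact Set.subsingleton_empty)
    · intro i j hij
      rw [edgeSet_bot]
      exact Set.disjoint_left.mpr (fun a ha => absurd ha (Set.notMem_empty a))
  intro m
  induction m with
  | zero =>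
    intro F h1 h2 h3 h4
    refine ⟨F, fun i => ⟨h1 i, h2 i⟩, h3, ?_⟩
    have hsub : (⋃ i, (F i).edgeSet) ⊆ G.edgeSet :=
      Set.iUnion_subset (fun i => edgeSet_mono (h1 i))
    have hempty : G.edgeSet \ ⋃ i, (F i).edgeSet = ∅ :=
      (Set.ncard_eq_zero (Set.toFinite _)).mp (Nat.le_zero.mp h4)
    exact subset_antisymm hsub (Set.diff_eq_empty.mp hempty)
  | succ m ih =>
    intro F h1 h2 h3 h4
    rcases Set.eq_empty_or_nonempty (G.edgeSet \ ⋃ i, (F i).edgeSet) with hemp | ⟨e, he⟩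
    · refine ⟨F, fun i => ⟨h1 i, h2 i⟩, h3, ?_⟩
      exact subset_antisymm (Set.iUnion_subset (fun i => edgeSet_mono (h1 i)))
        (Set.diff_eq_empty.mp hemp)
    · have heG : e ∈ G.edgeSet := he.1
      have hecov : ∀ i, e ∉ (F i).edgeSet := by
        intro i hei
        exact he.2 (Set.mem_iUnion.mpr ⟨i, hei⟩)
      by_cases hT : ∃ (nn : ℕ) (fs : Sym2 V) (i : Fin k) (xs ys : V),
          Reach F e nn fs ∧ fs = s(xs,ys) ∧ fs ∉ (F i).edgeSet ∧ ¬ (F i).Reachable xs ys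
      · obtain ⟨nn, fs, i0, x0, y0, hr0, hxy0, hni0, hnr0⟩ := hT
        obtain ⟨F', hle', hac', hdisj', hcov'⟩ :=
          augment G hk h1 h2 h3 heG hecov ⟨nn, hr0⟩ i0 x0 y0 hxy0 hni0 hnr0
        refine ih F' hle' hac' hdisj' ?_
        have hsub2 : G.edgeSet \ ⋃ i, (F' i).edgeSet ⊆
            (G.edgeSet \ ⋃ i, (F i).edgeSet) \ {e} := by
          intro g hg
          refine ⟨⟨hg.1, ?_⟩, ?_⟩
          · intro hgu
            exact hg.2 (hcov' (Set.mem_insert_iff.mpr (Or.inr hgu)))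
          · simp only [Set.mem_singleton_iff]
            rintro rfl
            exact hg.2 (hcov' (Set.mem_insert_iff.mpr (Or.inl rfl)))
        have hc1 : ((G.edgeSet \ ⋃ i, (F i).edgeSet) \ {e}).ncard + 1 =
            (G.edgeSet \ ⋃ i, (F i).edgeSet).ncard :=
          Set.ncard_diff_singleton_add_one he (Set.toFinite _)
        have hc2 := Set.ncard_le_ncard hsub2 (Set.toFinite _)
        omega
      · exfalso
        push_neg at hT
        set R : Set (Sym2 V) := {g | ∃ nn, Reach F e nn g} with hR
        have heR : e ∈ R := ⟨0, rfl⟩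
        have hRE : R ⊆ G.edgeSet := by
          rintro g ⟨nn, hg⟩
          exact reach_mem_edgeSet h1 heG nn g hg
        obtain ⟨x, y, hexy⟩ : ∃ a b, e = s(a,b) := Sym2.ind (fun a b => ⟨a, b, rfl⟩) e
        have hxyne : x ≠ y := by
          have hadj : G.Adj x y := (G.mem_edgeSet).mp (by rw [← hexy]; exact heG)
          exact hadj.ne
        set U : Set V := {v | ∃ g ∈ R, v ∈ g} with hU
        set Rall : SimpleGraph V := fromEdgeSet R with hRall
        have hRallE : Rall.edgeSet = R := edgeSet_fromEdgeSet_of_subset hRE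
        have hclose : ∀ g ∈ R, ∀ (i : Fin k) (a b : V), g = s(a,b) → g ∉ (F i).edgeSet →
            ∃ p : (F i).Walk a b, (∀ h' ∈ p.edges, h' ∈ R) := by
          rintro g ⟨nn, hg⟩ i a b hgab hgni
          have hreach : (F i).Reachable a b := hT nn g i a b hg hgab hgni
          obtain ⟨w⟩ := hreach
          refine ⟨(w.toPath : (F i).Path a b).1, ?_⟩
          intro h' hh'
          exact ⟨nn+1, Or.inr ⟨g, i, hg, a, b, (w.toPath : (F i).Path a b).1,
            hgab, hgni, (w.toPath : (F i).Path a b).2, hh'⟩⟩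
        have hN2a : ∀ nn g, Reach F e nn g → ∀ v, v ∈ g → Rall.Reachable x v := by
          intro nn
          induction nn with
          | zero =>
            intro g hg v hv
            rw [show g = e from hg, hexy] at hv
            have hadj : Rall.Adj x y := by
              rw [← mem_edgeSet, hRallE, ← hexy]
              exact heR
            rcases Sym2.mem_iff.mp hv with rfl | rfl
            · exact Reachable.refl _
            · exact hadj.reachable
          | succ nn ihn =>
            rintro g (hg | ⟨g', i, hg', x', y', p, hg'xy, hg'ni, hp, hgmem⟩) v hv
            · exact ihn g hg v hv
            · have hedges : ∀ h' ∈ p.edges, h' ∈ Rall.edgeSet := by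
                intro h' hh'
                rw [hRallE]
                exact ⟨nn+1, Or.inr ⟨g', i, hg', x', y', p, hg'xy, hg'ni, hp, hh'⟩⟩
              have hx' : Rall.Reachable x x' :=
                ihn g' hg' x' (by rw [hg'xy]; exact Sym2.mem_mk_left _ _)
              obtain ⟨w', hw'⟩ := Sym2.mem_iff_exists.mp hv
              have hvs : v ∈ p.support :=
                Walk.fst_mem_support_of_mem_edges p (by rw [← hw']; exact hgmem)
              have hvs2 : v ∈ (p.transfer Rall hedges).support := by
                rw [Walk.support_transfer]
                exact hvs
              exact hx'.trans ⟨(p.transfer Rall hedges).takeUntil v hvs2⟩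
        have hN2b : ∀ (i : Fin k) (u v : V), Rall.Reachable u v →
            (fromEdgeSet (R ∩ (F i).edgeSet)).Reachable u v := by
          intro i u v hr
          obtain ⟨p⟩ := hr
          apply reachable_of_walk_edges p
          intro a b hab
          have habR : s(a,b) ∈ R := by rw [← hRallE]; exact p.edges_subset_edgeSet hab
          have hRFsub : R ∩ (F i).edgeSet ⊆ G.edgeSet :=
            fun g hg => edgeSet_mono (h1 i) hg.2
          by_cases hFi : s(a,b) ∈ (F i).edgeSet
          · have hadj : (fromEdgeSet (R ∩ (F i).edgeSet)).Adj a b := by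
              rw [← mem_edgeSet, edgeSet_fromEdgeSet_of_subset hRFsub]
              exact ⟨habR, hFi⟩
            exact hadj.reachable
          · obtain ⟨q, hq⟩ := hclose _ habR i a b rfl hFi
            have hqe : ∀ h' ∈ q.edges, h' ∈ (fromEdgeSet (R ∩ (F i).edgeSet)).edgeSet := by
              intro h' hh'
              rw [edgeSet_fromEdgeSet_of_subset hRFsub]
              exact ⟨hq h' hh', q.edges_subset_edgeSet hh'⟩
            exact ⟨q.transfer _ hqe⟩
        have hxU : x ∈ U := ⟨e, heR, by rw [hexy]; exact Sym2.mem_mk_left _ _⟩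
        have hyU : y ∈ U := ⟨e, heR, by rw [hexy]; exact Sym2.mem_mk_right _ _⟩
        have hUcount : ∀ i : Fin k, U.ncard ≤ (R ∩ (F i).edgeSet).ncard + 1 := by
          intro i
          have hconn : ∀ u ∈ U, (fromEdgeSet (R ∩ (F i).edgeSet)).Reachable x u := by
            rintro u ⟨g, ⟨nn, hg⟩, hu⟩
            exact hN2b i x u (hN2a nn g hg u hu)
          have hle := ncard_le_of_connects hxU hconn
          rwa [edgeSet_fromEdgeSet_of_subset (fun g hg => edgeSet_mono (h1 i) hg.2)] at hle
        have hsum : ∑ i : Fin k, (R ∩ (F i).edgeSet).ncard ≤ (R \ {e}).ncard := by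
          refine sum_ncard_le _ _ ?_ ?_
          · intro i g hg
            refine ⟨hg.1, ?_⟩
            simp only [Set.mem_singleton_iff]
            rintro rfl
            exact hecov i hg.2
          · intro i j hij
            exact Set.disjoint_left.mpr
              (fun g hgi hgj => Set.disjoint_left.mp (h3 hij) hgi.2 hgj.2)
        set H : G.Subgraph := ⟨U, fun a b => s(a,b) ∈ R,
          fun {a b} hab => (G.mem_edgeSet).mp (hRE hab),
          fun {a b} hab => ⟨s(a,b), hab, Sym2.mem_mk_left a b⟩,
          ⟨fun a b hab => by show s(b,a) ∈ R; rwa [Sym2.eq_swap]⟩⟩ with hH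
        have hHe : H.edgeSet = R := by
          ext g
          induction g using Sym2.ind with
          | _ a b => exact Subgraph.mem_edgeSet
        have hU2 : 2 ≤ U.ncard := by
          have := (Set.one_lt_ncard (Set.toFinite _)).mpr ⟨x, hxU, y, hyU, hxyne⟩
          omega
        have hdH := hdens H (by exact hU2)
        rw [hHe, show H.verts = U from rfl] at hdH
        have hRne : 0 < R.ncard := (Set.ncard_pos (Set.toFinite _)).mpr ⟨e, heR⟩
        have hRdiff : (R \ {e}).ncard + 1 = R.ncard :=
          Set.ncard_diff_singleton_add_one heR (Set.toFinite _)
        have hsum2 : k * U.ncard ≤ (∑ i : Fin k, (R ∩ (F i).edgeSet).ncard) + k := by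
          calc k * U.ncard = ∑ _i : Fin k, U.ncard := by
                rw [Finset.sum_const, Finset.card_univ, Fintype.card_fin, smul_eq_mul]
            _ ≤ ∑ i : Fin k, ((R ∩ (F i).edgeSet).ncard + 1) :=
                Finset.sum_le_sum (fun i _ => hUcount i)
            _ = (∑ i : Fin k, (R ∩ (F i).edgeSet).ncard) + k := by
                rw [Finset.sum_add_distrib, Finset.sum_const, Finset.card_univ,
                  Fintype.card_fin, smul_eq_mul, mul_one]
        have hmul : k * (U.ncard - 1) + k = k * U.ncard := by
          obtain ⟨u', hu'⟩ : ∃ u', U.ncard = u' + 1 := ⟨U.ncard - 1, by omega⟩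
          rw [hu']
          simp [Nat.mul_succ]
        have hfin : R.ncard + k ≤ k * U.ncard := by omega
        omega

end NashW

set_option maxHeartbeats 1600000 in
/-- (Nash-Williams) For any finite simple graph with at least one edge, the arboricity
equals the maximum over all subgraphs `H` with at least two vertices of
`⌈|E(H)| / (|V(H)| - 1)⌉`. -/
theorem arboricity_eq_sSup_ceil {V : Type*} [Fintype V] (G : SimpleGraph V)
    (hG : G.edgeSet.Nonempty) :
    arboricity G = sSup {t : ℕ | ∃ H : G.Subgraph, 2 ≤ H.verts.ncard ∧
      (t : ℤ) = ⌈(H.edgeSet.ncard : ℚ) / ((H.verts.ncard : ℚ) - 1)⌉} := by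
  classical
  have hDne := NashW.DD_nonempty G
  have hA : arboricity G ∈ NashW.DD G := Nat.sInf_mem hDne
  have hub : ∀ t ∈ NashW.SS G, t ≤ arboricity G := fun t ht => NashW.mem_SS_le ht hA
  have h1S := NashW.one_mem_SS G hG
  have hbdd : BddAbove (NashW.SS G) := ⟨arboricity G, fun t ht => hub t ht⟩
  have hk1 : 1 ≤ sSup (NashW.SS G) := le_csSup hbdd h1S
  have hdens : ∀ H : G.Subgraph, 2 ≤ H.verts.ncard →
      H.edgeSet.ncard ≤ (sSup (NashW.SS G)) * (H.verts.ncard - 1) := by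
    intro H h2
    have hnonneg : (0:ℤ) ≤ ⌈(H.edgeSet.ncard : ℚ) / ((H.verts.ncard : ℚ) - 1)⌉ := by
      apply Int.ceil_nonneg
      exact div_nonneg (by positivity) (le_of_lt (NashW.denom_pos h2))
    have htmem : (⌈(H.edgeSet.ncard : ℚ) / ((H.verts.ncard : ℚ) - 1)⌉).toNat ∈ NashW.SS G :=
      ⟨H, h2, by rw [Int.toNat_of_nonneg hnonneg]⟩
    have hle : (⌈(H.edgeSet.ncard : ℚ) / ((H.verts.ncard : ℚ) - 1)⌉).toNat ≤
        sSup (NashW.SS G) := le_csSup hbdd htmem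
    refine NashW.le_of_ceil_le h2 ?_
    calc ⌈(H.edgeSet.ncard : ℚ) / ((H.verts.ncard : ℚ) - 1)⌉
        = ((⌈(H.edgeSet.ncard : ℚ) / ((H.verts.ncard : ℚ) - 1)⌉).toNat : ℤ) :=
          (Int.toNat_of_nonneg hnonneg).symm
      _ ≤ ((sSup (NashW.SS G) : ℕ) : ℤ) := by exact_mod_cast hle
  obtain ⟨F', hF1, hF2, hF3⟩ := NashW.exists_decomp G (sSup (NashW.SS G)) (by omega) hdens
  have hle2 : arboricity G ≤ sSup (NashW.SS G) := Nat.sInf_le ⟨F', hF1, hF2, hF3⟩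
  exact le_antisymm hle2 (csSup_le ⟨1, h1S⟩ hub)
end

section
/- For every n ≥ 1, the arboricity of the hypercube Q_n equals ⌊n/2⌋ + 1. -/
open SimpleGraph

/-- The `n`-dimensional hypercube graph `Q_n`: vertices are binary vectors of length `n`,
two vertices adjacent iff they differ in exactly one coordinate. -/
def hypercube (n : ℕ) : SimpleGraph (Fin n → Bool) where
  Adj x y := ∃! i, x i ≠ y i
  symm := by
    constructor
    rintro x y ⟨i, hi, hu⟩
    exact ⟨i, hi.symm, fun j hj => hu j hj.symm⟩
  loopless := by
    constructor
    rintro x ⟨i, hi, -⟩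
    exact hi rfl

namespace ArbAux


variable {V : Type*}

/-- Two copies of `F` plus "vertical" edges at the vertices in `T`. -/
def dbl (F : SimpleGraph V) (T : Set V) : SimpleGraph (Bool × V) where
  Adj u v := (u.1 = v.1 ∧ F.Adj u.2 v.2) ∨ (u.1 ≠ v.1 ∧ u.2 = v.2 ∧ u.2 ∈ T)
  symm := by
    constructor
    rintro ⟨a, x⟩ ⟨b, y⟩ (⟨h1, h2⟩ | ⟨h1, h2, h3⟩)
    · exact Or.inl ⟨h1.symm, h2.symm⟩
    · exact Or.inr ⟨fun h => h1 h.symm, h2.symm, h2 ▸ h3⟩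
  loopless := by
    constructor
    rintro ⟨a, x⟩ (⟨-, h⟩ | ⟨h, -⟩)
    · exact F.loopless.irrefl _ h
    · exact h rfl

lemma dbl_adj {F : SimpleGraph V} {T : Set V} {u v : Bool × V} :
    (dbl F T).Adj u v ↔ (u.1 = v.1 ∧ F.Adj u.2 v.2) ∨ (u.1 ≠ v.1 ∧ u.2 = v.2 ∧ u.2 ∈ T) :=
  Iff.rfl

lemma reach_of_dbl_walk {F : SimpleGraph V} {T : Set V} {u v : Bool × V}
    (w : (dbl F T).Walk u v) : F.Reachable u.2 v.2 := by
  induction w with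
  | nil => exact Reachable.refl _
  | cons h p ih =>
      rcases h with ⟨-, h⟩ | ⟨-, h, -⟩
      · exact (h.reachable).trans ih
      · rwa [h]

lemma dbl_reach {F : SimpleGraph V} {T : Set V} {u v : Bool × V}
    (h : (dbl F T).Reachable u v) : F.Reachable u.2 v.2 :=
  h.elim fun w => reach_of_dbl_walk w

lemma dbl_empty_side {F : SimpleGraph V} {u v : Bool × V}
    (w : (dbl F ∅).Walk u v) : u.1 = v.1 := by
  induction w with
  | nil => rfl
  | cons h p ih =>
      rcases h with ⟨h, -⟩ | ⟨-, -, h⟩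
      · exact h.trans ih
      · exact absurd h (Set.notMem_empty _)

/-- predicate for vertical edges -/
def vq : Sym2 (Bool × V) → Bool :=
  Sym2.lift ⟨fun u v => u.1 != v.1, fun u v => by show (u.1 != v.1) = (v.1 != u.1); cases u.1 <;> cases v.1 <;> rfl⟩

@[simp] lemma vq_mk {u v : Bool × V} : vq s(u, v) = (u.1 != v.1) := rfl

lemma dbl_count {F : SimpleGraph V} {T : Set V} {u v : Bool × V} (w : (dbl F T).Walk u v) :
    (w.edges.countP vq + (if u.1 = v.1 then 0 else 1)) % 2 = 0 := by
  induction w with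
  | nil => simp
  | @cons a m b h p ih =>
      rw [Walk.edges_cons, List.countP_cons]
      rcases h with ⟨h1, -⟩ | ⟨h1, -, -⟩
      · have hq : vq s(a, m) = false := by simp [h1]
        rw [hq, h1]
        simpa using ih
      · have hq : vq s(a, m) = true := by simp only [vq_mk, bne_iff_ne]; exact h1
        rw [hq]
        revert ih
        cases hu : a.1 <;> cases hm : m.1 <;> cases hv : b.1 <;> simp_all <;> omega

lemma dbl_lift {F : SimpleGraph V} {T : Set V} {u v : Bool × V} (w : (dbl F T).Walk u v)
    (h0 : ∀ e ∈ w.edges, vq e = false) :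
    ∃ w' : F.Walk u.2 v.2, w'.edges = w.edges.map (Sym2.map Prod.snd)
      ∧ w'.support = w.support.map Prod.snd ∧ ∀ z ∈ w.support, z.1 = u.1 := by
  revert h0
  induction w with
  | nil => exact fun _ => ⟨.nil, by simp, by simp, by simp⟩
  | @cons a m b h p ih =>
      intro h0
      have hv : vq s(a, m) = false :=
        h0 _ (by rw [Walk.edges_cons]; exact List.mem_cons_self)
      rcases h with ⟨h1, h2⟩ | ⟨h1, -, -⟩
      · obtain ⟨w', he, hs, hside⟩ :=
          ih (fun e he' => h0 e (by exact List.mem_cons_of_mem _ he'))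
        refine ⟨.cons h2 w', by simp [he]; rfl, by simp [hs]; rfl, ?_⟩
        intro z hz
        change z ∈ a :: p.support at hz
        rcases List.mem_cons.mp hz with rfl | hz
        · rfl
        · rw [hside z hz, h1]
      · exfalso
        rw [vq_mk] at hv
        simp [bne_iff_ne] at hv
        exact h1 hv

lemma vertical_structure {F : SimpleGraph V} {T : Set V} {e : Sym2 (Bool × V)}
    (he : e ∈ (dbl F T).edgeSet) (hq : vq e = true) :
    ∃ a x, e = s((a, x), (!a, x)) ∧ x ∈ T := by
  induction e using Sym2.ind with
  | _ p1 p2 =>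
      rw [mem_edgeSet] at he
      rcases he with ⟨h1, -⟩ | ⟨h1, h2, h3⟩
      · rw [vq_mk, h1] at hq; simp at hq
      · refine ⟨p1.1, p1.2, ?_, h3⟩
        have : p2 = (!p1.1, p1.2) := by
          ext
          · cases hp1 : p1.1 <;> cases hp2 : p2.1 <;> simp_all
          · exact h2.symm
        rw [this]

theorem dbl_isAcyclic {F : SimpleGraph V} {T : Set V} (hF : F.IsAcyclic)
    (hT : ∀ x ∈ T, ∀ y ∈ T, F.Reachable x y → x = y) : (dbl F T).IsAcyclic := by
  classical
  intro v c hc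
  have hcount : c.edges.countP vq % 2 = 0 := by simpa using dbl_count c
  by_cases h0 : c.edges.countP vq = 0
  · -- no vertical edges: project the cycle to F
    have hall : ∀ e ∈ c.edges, vq e = false := by
      intro e he
      have := List.countP_eq_zero.mp h0 e he
      simpa using this
    obtain ⟨w', he, hs, hside⟩ := dbl_lift c hall
    have hsidemem : ∀ z ∈ c.support, z.1 = v.1 := hside
    have hinj : ∀ x ∈ c.support, ∀ y ∈ c.support, x.2 = y.2 → x = y := by
      intro x hx y hy hxy
      exact Prod.ext ((hsidemem x hx).trans (hsidemem y hy).symm) hxy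
    have hcyc' : w'.IsCycle := by
      constructor
      constructor
      constructor
      · -- edges nodup
        rw [he]
        refine List.Nodup.map_on ?_ hc.edges_nodup
        intro e1 he1 e2 he2 hmap
        induction e1 using Sym2.ind with
        | _ a b =>
        induction e2 using Sym2.ind with
        | _ p q =>
            simp only [Sym2.map_pair_eq, Sym2.eq_iff] at hmap
            have ha := c.fst_mem_support_of_mem_edges he1
            have hb := c.snd_mem_support_of_mem_edges he1
            have hp := c.fst_mem_support_of_mem_edges he2
            have hq := c.snd_mem_support_of_mem_edges he2
            rcases hmap with ⟨h1, h2⟩ | ⟨h1, h2⟩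
            · rw [hinj a ha p hp h1, hinj b hb q hq h2]
            · rw [hinj a ha q hq h1, hinj b hb p hp h2, Sym2.eq_swap]
      · -- ne nil
        intro hnil
        have h3 := hc.three_le_length
        have : c.length = 0 := by
          have : w'.length = 0 := by rw [hnil]; rfl
          rw [← Walk.length_edges, he, List.length_map, Walk.length_edges] at this
          exact this
        omega
      · -- support tail nodup
        have hsupp := hc.support_nodup
        rw [hs, Walk.support_eq_cons c, List.map_cons]
        simp only [List.tail_cons]
        rw [Walk.support_eq_cons c] at hsupp
        simp only [List.tail_cons] at hsupp ⊢
        refine List.Nodup.map_on ?_ hsupp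
        intro x hx y hy hxy
        have hx' : x ∈ c.support := by rw [Walk.support_eq_cons c]; exact List.mem_cons_of_mem _ hx
        have hy' : y ∈ c.support := by rw [Walk.support_eq_cons c]; exact List.mem_cons_of_mem _ hy
        exact hinj x hx' y hy' hxy
    exact hF w' hcyc'
  · -- at least two vertical edges
    have h2 : 2 ≤ c.edges.countP vq := by omega
    rw [List.countP_eq_length_filter] at h2
    have hnodup : (c.edges.filter vq).Nodup := hc.edges_nodup.filter _
    obtain ⟨e1, e2, he1, he2, hne⟩ :
        ∃ e1 e2, e1 ∈ c.edges.filter vq ∧ e2 ∈ c.edges.filter vq ∧ e1 ≠ e2 := by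
      rcases hl : c.edges.filter vq with _ | ⟨a, _ | ⟨b, rest⟩⟩
      · rw [hl] at h2; simp at h2
      · rw [hl] at h2; simp at h2
      · rw [hl] at hnodup
        have hab : a ≠ b := by
          have := List.nodup_cons.mp hnodup
          exact fun h => this.1 (h ▸ List.mem_cons_self)
        exact ⟨a, b, by simp, by simp, hab⟩
    have he1' := List.mem_filter.mp he1
    have he2' := List.mem_filter.mp he2
    obtain ⟨a1, x1, rfl, hx1⟩ :=
      vertical_structure (c.edges_subset_edgeSet he1'.1) he1'.2
    obtain ⟨a2, x2, rfl, hx2⟩ :=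
      vertical_structure (c.edges_subset_edgeSet he2'.1) he2'.2
    have hxx : x1 ≠ x2 := by
      rintro rfl
      apply hne
      cases a1 <;> cases a2 <;> first | rfl | (rw [Sym2.eq_swap]; rfl)
    have hm1 : (a1, x1) ∈ c.support := c.fst_mem_support_of_mem_edges he1'.1
    have hm2 : (a2, x2) ∈ c.support := c.fst_mem_support_of_mem_edges he2'.1
    have r1 : (dbl F T).Reachable v (a1, x1) := ⟨c.takeUntil _ hm1⟩
    have r2 : (dbl F T).Reachable v (a2, x2) := ⟨c.takeUntil _ hm2⟩
    exact hxx (hT x1 hx1 x2 hx2 (dbl_reach (r1.symm.trans r2)))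



theorem acyclic_card_le [Fintype V] [Nonempty V] {G : SimpleGraph V} (hG : G.IsAcyclic)
    [Fintype G.edgeSet] : G.edgeFinset.card + 1 ≤ Fintype.card V := by
  classical
  set root : V → V := fun x => (G.connectedComponentMk x).out with hrootdef
  have hmkroot : ∀ x, G.connectedComponentMk (root x) = G.connectedComponentMk x :=
    fun x => Quot.out_eq _
  have hroot_reach : ∀ x, G.Reachable (root x) x :=
    fun x => ConnectedComponent.exact (hmkroot x)
  have hroot_eq : ∀ x y, G.Reachable x y → root x = root y := by
    intro x y h
    simp only [hrootdef]
    rw [ConnectedComponent.sound h]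
  have hrootroot : ∀ x, root (root x) = root x := by
    intro x
    exact hroot_eq _ _ (hroot_reach x)
  set Pp : ∀ x, G.Path (root x) x := fun x => (Classical.choice (hroot_reach x)).toPath
    with hPdef
  set L : V → ℕ := fun x => (Pp x).val.length with hLdef
  have huniq : ∀ x (q : G.Path (root x) x), q = Pp x := fun x q => hG.path_unique q (Pp x)
  -- Lemma A
  have lemA : ∀ x y (hxy : y ∈ (Pp x).val.support), y ≠ x → L y < L x := by
    intro x y hxy hne
    have hr : root y = root x :=
      hroot_eq y x ⟨(Pp x).val.dropUntil y hxy⟩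
    have htp : ((Pp x).val.takeUntil y hxy).IsPath := (Pp x).2.takeUntil hxy
    set q : G.Path (root y) y :=
      ⟨((Pp x).val.takeUntil y hxy).copy hr.symm rfl, by rwa [Walk.isPath_copy]⟩
      with hqdef
    have := huniq y q
    have hlen : L y = ((Pp x).val.takeUntil y hxy).length := by
      rw [hLdef]
      simp only
      rw [← this, hqdef]
      simp [Walk.length_copy]
    have hsplit := congrArg Walk.length ((Pp x).val.take_spec hxy)
    rw [Walk.length_append] at hsplit
    have hdrop : ((Pp x).val.dropUntil y hxy).length ≠ 0 := by
      intro h0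
      exact hne (Walk.eq_of_length_eq_zero h0)
    have hLx : L x = (Pp x).val.length := rfl
    rw [hlen]
    omega
  -- Lemma B
  have lemB : ∀ x y (h : G.Adj x y), y ∉ (Pp x).val.support →
      L y = L x + 1 ∧
        ((Pp y).val =
          ((Pp x).val.concat h).copy (hroot_eq x y h.reachable) rfl) := by
    intro x y h hny
    have hW : ((Pp x).val.concat h).IsPath := by
      rw [← Walk.isPath_reverse_iff, Walk.reverse_concat]
      refine Walk.IsPath.cons ((Pp x).2.reverse) ?_
      rwa [Walk.support_reverse, List.mem_reverse]
    set q : G.Path (root y) y :=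
      ⟨((Pp x).val.concat h).copy (hroot_eq x y h.reachable) rfl, by
        rwa [Walk.isPath_copy]⟩ with hqdef
    have hq := huniq y q
    constructor
    · rw [hLdef]
      simp only
      rw [← hq, hqdef]
      simp [Walk.length_copy, Walk.length_concat]
    · rw [← hq, hqdef]
  -- Lemma C: injectivity core
  have lemC : ∀ u x1 x2, G.Adj x1 u → G.Adj x2 u → L x1 < L u → L x2 < L u → x1 = x2 := by
    intro u x1 x2 h1 h2 hl1 hl2
    have hnm1 : u ∉ (Pp x1).val.support := by
      intro hmem
      exact absurd (lemA x1 u hmem h1.ne') (by omega)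
    have hnm2 : u ∉ (Pp x2).val.support := by
      intro hmem
      exact absurd (lemA x2 u hmem h2.ne') (by omega)
    obtain ⟨-, hB1⟩ := lemB x1 u h1 hnm1
    obtain ⟨-, hB2⟩ := lemB x2 u h2 hnm2
    have hsupp : ((Pp x1).val.support).concat u
        = ((Pp x2).val.support).concat u := by
      have e1 := congrArg Walk.support hB1
      have e2 := congrArg Walk.support hB2
      rw [Walk.support_copy, Walk.support_concat] at e1 e2
      simp only [List.concat_eq_append]
      rw [← e1, ← e2]
    simp only [List.concat_eq_append] at hsupp
    have hsupp' := List.append_cancel_right hsupp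
    by_contra hne
    have hx1 : x1 ∈ (Pp x2).val.support := by
      rw [← hsupp']
      exact Walk.end_mem_support _
    have hx2 : x2 ∈ (Pp x1).val.support := by
      rw [hsupp']
      exact Walk.end_mem_support _
    exact absurd (lemA x2 x1 hx1 hne) (by have := lemA x1 x2 hx2 (fun h => hne h.symm); omega)
  -- L at a root is zero
  have hLroot : ∀ x, L (root x) = 0 := by
    intro x
    set q : G.Path (root (root x)) (root x) :=
      ⟨(Walk.nil : G.Walk (root x) (root x)).copy (hrootroot x).symm rfl, by
        rw [Walk.isPath_copy]; exact Walk.IsPath.nil⟩ with hqdef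
    have hq := huniq (root x) q
    rw [hLdef]
    simp only
    rw [← hq, hqdef]
    simp [Walk.length_copy]
  -- the injection
  have hrep : ∀ e ∈ G.edgeFinset, ∃ x y, e = s(x, y) ∧ G.Adj x y ∧ L y < L x := by
    intro e he
    rw [mem_edgeFinset] at he
    induction e using Sym2.ind with
    | _ a b =>
        rw [mem_edgeSet] at he
        rcases lt_or_ge (L b) (L a) with h | h
        · exact ⟨a, b, rfl, he, h⟩
        · refine ⟨b, a, Sym2.eq_swap, he.symm, lt_of_le_of_ne h ?_⟩
          intro heq
          -- L a ≠ L b for adjacent a b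
          by_cases hmem : b ∈ (Pp a).val.support
          · exact absurd (lemA a b hmem he.ne') (by omega)
          · obtain ⟨hl, -⟩ := lemB a b he hmem
            omega
  set f : Sym2 V → V := fun e => if he : e ∈ G.edgeFinset then (hrep e he).choose
    else Classical.arbitrary V with hfdef
  have hfspec : ∀ e (he : e ∈ G.edgeFinset),
      ∃ y, e = s(f e, y) ∧ G.Adj (f e) y ∧ L y < L (f e) := by
    intro e he
    obtain ⟨y, hy⟩ := (hrep e he).choose_spec
    rw [hfdef]
    simp only [dif_pos he]
    exact ⟨y, hy⟩
  set v0 : V := root (Classical.arbitrary V) with hv0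
  have hLv0 : L v0 = 0 := hLroot _
  have hmaps : ∀ e ∈ G.edgeFinset, f e ∈ Finset.univ.erase v0 := by
    intro e he
    obtain ⟨y, -, -, hy⟩ := hfspec e he
    refine Finset.mem_erase.mpr ⟨?_, Finset.mem_univ _⟩
    intro heq
    rw [heq, hLv0] at hy
    omega
  have hinj : ∀ e1 ∈ G.edgeFinset, ∀ e2 ∈ G.edgeFinset, f e1 = f e2 → e1 = e2 := by
    intro e1 he1 e2 he2 hf
    obtain ⟨y1, hrep1, hadj1, hl1⟩ := hfspec e1 he1
    obtain ⟨y2, hrep2, hadj2, hl2⟩ := hfspec e2 he2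
    rw [hf] at hrep1 hadj1 hl1
    have hy12 := lemC (f e2) y1 y2 hadj1.symm hadj2.symm hl1 hl2
    rw [hy12] at hrep1
    exact hrep1.trans hrep2.symm
  have hcard := Finset.card_le_card_of_injOn f hmaps hinj
  rw [Finset.card_erase_of_mem (Finset.mem_univ _), Finset.card_univ] at hcard
  have : 1 ≤ Fintype.card V := Fintype.card_pos
  omega

/-- The equivalence splitting off the first coordinate. -/
def eqvStep (m : ℕ) : (Fin (m + 1) → Bool) ≃ Bool × (Fin m → Bool) where
  toFun x := (x 0, x ∘ Fin.succ)
  invFun p := Fin.cons p.1 p.2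
  left_inv x := Fin.cons_self_tail x
  right_inv p := by
    ext
    · simp
    · simp [Fin.cons_succ]
    
lemma hyp_step_eq (m : ℕ) :
    hypercube (m + 1) = SimpleGraph.comap (eqvStep m) (dbl (hypercube m) Set.univ) := by
  ext x y
  show (∃! i, x i ≠ y i) ↔ _
  constructor
  · rintro ⟨i, hi, hu⟩
    induction i using Fin.cases with
    | zero =>
        refine Or.inr ⟨hi, ?_, trivial⟩
        funext j
        by_contra hne
        exact (Fin.succ_ne_zero j) (hu j.succ hne)
    | succ j =>
        refine Or.inl ⟨?_, j, hi, fun j' hj' => ?_⟩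
        · by_contra hne
          exact (Fin.succ_ne_zero j) (hu 0 hne).symm
        · exact Fin.succ_injective _ (hu j'.succ hj')
  · rintro (⟨h0, j, hj, hu⟩ | ⟨h0, ht, -⟩)
    · refine ⟨j.succ, hj, fun i hi => ?_⟩
      induction i using Fin.cases with
      | zero => exact absurd hi (not_not.mpr h0)
      | succ j' => exact congrArg Fin.succ (hu j' hi)
    · refine ⟨0, h0, fun i hi => ?_⟩
      induction i using Fin.cases with
      | zero => rfl
      | succ j' => exact absurd (congrFun ht j') hi

lemma dbl_comap_univ {α β : Type*} (f : α ≃ β) (B : SimpleGraph β) :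
    dbl (SimpleGraph.comap f B) Set.univ
      = SimpleGraph.comap (Equiv.prodCongr (Equiv.refl Bool) f) (dbl B Set.univ) := by
  ext ⟨a, x⟩ ⟨b, y⟩
  show _ ↔ (dbl B Set.univ).Adj (a, f x) (b, f y)
  show (a = b ∧ B.Adj (f x) (f y)) ∨ (a ≠ b ∧ x = y ∧ x ∈ Set.univ) ↔
    (a = b ∧ B.Adj (f x) (f y)) ∨ (a ≠ b ∧ f x = f y ∧ f x ∈ Set.univ)
  simp [f.injective.eq_iff]

def eqv2 (m : ℕ) : (Fin (m + 2) → Bool) ≃ Bool × (Bool × (Fin m → Bool)) :=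
  (eqvStep (m + 1)).trans (Equiv.prodCongr (Equiv.refl Bool) (eqvStep m))

lemma hyp_step2_eq (m : ℕ) :
    hypercube (m + 2)
      = SimpleGraph.comap (eqv2 m) (dbl (dbl (hypercube m) Set.univ) Set.univ) := by
  rw [hyp_step_eq (m + 1), hyp_step_eq m, dbl_comap_univ]
  rfl



variable {α β : Type*}

def Pack (G : SimpleGraph α) (k : ℕ) : Prop :=
  ∃ F : Fin k → SimpleGraph α,
    (∀ j, F j ≤ G) ∧ (∀ j, (F j).IsAcyclic) ∧
    (∀ j j' u v, (F j).Adj u v → (F j').Adj u v → j = j') ∧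
    (∀ u v, G.Adj u v → ∃ j, (F j).Adj u v)

def GPack (G : SimpleGraph α) (k : ℕ) : Prop :=
  ∃ (F : Fin k → SimpleGraph α) (σ : α → Fin k),
    (∀ j, F j ≤ G) ∧ (∀ j, (F j).IsAcyclic) ∧
    (∀ j j' u v, (F j).Adj u v → (F j').Adj u v → j = j') ∧
    (∀ u v, G.Adj u v → ∃ j, (F j).Adj u v) ∧
    (∀ x y, σ x = σ y → (F (σ x)).Reachable x y → x = y)

section Mid
variable {G : SimpleGraph α} {k : ℕ} (F : Fin k → SimpleGraph α) (σ : α → Fin k)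

/-- the middle (odd-level) family -/
def midF (j : Fin k) : SimpleGraph (Bool × α) := dbl (F j) (σ ⁻¹' {j})

lemma midF_le (hle : ∀ j, F j ≤ G) (j : Fin k) : midF F σ j ≤ dbl G Set.univ := by
  rintro ⟨a, x⟩ ⟨b, y⟩ (⟨h1, h2⟩ | ⟨h1, h2, h3⟩)
  · exact Or.inl ⟨h1, hle j h2⟩
  · exact Or.inr ⟨h1, h2, trivial⟩

lemma midF_acyclic (hac : ∀ j, (F j).IsAcyclic)
    (htr : ∀ x y, σ x = σ y → (F (σ x)).Reachable x y → x = y) (j : Fin k) :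
    (midF F σ j).IsAcyclic := by
  refine dbl_isAcyclic (hac j) ?_
  intro x hx y hy hr
  have hx' : σ x = j := hx
  have hy' : σ y = j := hy
  exact htr x y (hx'.trans hy'.symm) (by rwa [hx'])

lemma midF_disj (hdis : ∀ j j' u v, (F j).Adj u v → (F j').Adj u v → j = j')
    (j j' : Fin k) (u v : Bool × α) (h : (midF F σ j).Adj u v)
    (h' : (midF F σ j').Adj u v) : j = j' := by
  rcases h with ⟨h1, h2⟩ | ⟨h1, h2, h3⟩ <;> rcases h' with ⟨h1', h2'⟩ | ⟨h1', h2', h3'⟩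
  · exact hdis j j' _ _ h2 h2'
  · exact absurd h1 h1'
  · exact absurd h1' h1
  · have e1 : σ u.2 = j := h3
    have e2 : σ u.2 = j' := h3'
    exact e1.symm.trans e2

lemma midF_cover (hcov : ∀ u v, G.Adj u v → ∃ j, (F j).Adj u v)
    (u v : Bool × α) (h : (dbl G Set.univ).Adj u v) : ∃ j, (midF F σ j).Adj u v := by
  rcases h with ⟨h1, h2⟩ | ⟨h1, h2, -⟩
  · obtain ⟨j, hj⟩ := hcov _ _ h2
    exact ⟨j, Or.inl ⟨h1, hj⟩⟩
  · exact ⟨σ u.2, Or.inr ⟨h1, h2, rfl⟩⟩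

end Mid

theorem step_odd_abs {G : SimpleGraph α} {k : ℕ} (h : GPack G k) :
    Pack (dbl G Set.univ) k := by
  obtain ⟨F, σ, hle, hac, hdis, hcov, htr⟩ := h
  exact ⟨midF F σ, midF_le F σ hle, midF_acyclic F σ hac htr, midF_disj F σ hdis,
    midF_cover F σ hcov⟩

theorem step_even_abs {G : SimpleGraph α} {k : ℕ} (h : GPack G k) :
    GPack (dbl (dbl G Set.univ) Set.univ) (k + 1) := by
  obtain ⟨F, σ, hle, hac, hdis, hcov, htr⟩ := h
  set F1 : Fin k → SimpleGraph (Bool × α) := midF F σ with hF1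
  set F2 : Fin (k + 1) → SimpleGraph (Bool × (Bool × α)) :=
    Fin.snoc (fun j => dbl (F1 j) ∅) (dbl ⊥ Set.univ) with hF2
  have hF2c : ∀ j : Fin k, F2 j.castSucc = dbl (F1 j) ∅ := by
    intro j; rw [hF2]; exact Fin.snoc_castSucc _ _ _
  have hF2l : F2 (Fin.last k) = dbl ⊥ Set.univ := by
    rw [hF2]; exact Fin.snoc_last _ _
  set σ2 : Bool × (Bool × α) → Fin (k + 1) :=
    fun u => if u.2.1 = u.1 then Fin.last k else (σ u.2.2).castSucc with hσ2
  refine ⟨F2, σ2, ?_, ?_, ?_, ?_, ?_⟩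
  · -- le
    intro j
    induction j using Fin.lastCases with
    | last =>
        rw [hF2l]
        rintro ⟨a, x⟩ ⟨b, y⟩ (⟨-, h2⟩ | ⟨h1, h2, -⟩)
        · exact absurd h2 (by simp)
        · exact Or.inr ⟨h1, h2, trivial⟩
    | cast j =>
        rw [hF2c]
        rintro ⟨a, x⟩ ⟨b, y⟩ (⟨h1, h2⟩ | ⟨-, -, h3⟩)
        · exact Or.inl ⟨h1, midF_le F σ hle j h2⟩
        · exact absurd h3 (Set.notMem_empty _)
  · -- acyclic
    intro j
    induction j using Fin.lastCases with
    | last =>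
        rw [hF2l]
        exact dbl_isAcyclic isAcyclic_bot (fun x _ y _ hr => reachable_bot.mp hr)
    | cast j =>
        rw [hF2c]
        exact dbl_isAcyclic (midF_acyclic F σ hac htr j)
          (fun x hx => absurd hx (Set.notMem_empty _))
  · -- disjoint
    intro j j' u v h h'
    induction j using Fin.lastCases with
    | last =>
        induction j' using Fin.lastCases with
        | last => rfl
        | cast j' =>
            rw [hF2l] at h
            rw [hF2c] at h'
            rcases h with ⟨-, h2⟩ | ⟨h1, -, -⟩
            · exact absurd h2 (by simp)
            · rcases h' with ⟨h1', -⟩ | ⟨-, -, h3'⟩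
              · exact absurd h1' h1
              · exact absurd h3' (Set.notMem_empty _)
    | cast j =>
        induction j' using Fin.lastCases with
        | last =>
            rw [hF2c] at h
            rw [hF2l] at h'
            rcases h' with ⟨-, h2'⟩ | ⟨h1', -, -⟩
            · exact absurd h2' (by simp)
            · rcases h with ⟨h1, -⟩ | ⟨-, -, h3⟩
              · exact absurd h1 h1'
              · exact absurd h3 (Set.notMem_empty _)
        | cast j' =>
            rw [hF2c] at h h'
            rcases h with ⟨-, h2⟩ | ⟨-, -, h3⟩
            · rcases h' with ⟨-, h2'⟩ | ⟨-, -, h3'⟩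
              · exact congrArg Fin.castSucc (midF_disj F σ hdis j j' _ _ h2 h2')
              · exact absurd h3' (Set.notMem_empty _)
            · exact absurd h3 (Set.notMem_empty _)
  · -- cover
    intro u v h
    rcases h with ⟨h1, h2⟩ | ⟨h1, h2, -⟩
    · obtain ⟨j, hj⟩ := midF_cover F σ hcov _ _ h2
      exact ⟨j.castSucc, by rw [hF2c]; exact Or.inl ⟨h1, hj⟩⟩
    · exact ⟨Fin.last k, by rw [hF2l]; exact Or.inr ⟨h1, h2, trivial⟩⟩
  · -- transversal
    intro x y hσ hr
    have hcl : ∀ j : Fin k, j.castSucc ≠ Fin.last k := fun j => (Fin.castSucc_lt_last j).ne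
    by_cases hx : x.2.1 = x.1
    · have hσx : σ2 x = Fin.last k := by rw [hσ2]; simp [hx]
      have hy : y.2.1 = y.1 := by
        by_contra hy
        rw [hσx] at hσ
        have : σ2 y = (σ y.2.2).castSucc := by rw [hσ2]; simp [hy]
        rw [this] at hσ
        exact hcl _ hσ.symm
      rw [hσx, hF2l] at hr
      have h2 : x.2 = y.2 := reachable_bot.mp (dbl_reach hr)
      have h1 : x.1 = y.1 := by rw [← hx, h2, hy]
      exact Prod.ext h1 h2
    · have hσx : σ2 x = (σ x.2.2).castSucc := by rw [hσ2]; simp [hx]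
      have hy : ¬ y.2.1 = y.1 := by
        intro hy
        rw [hσx] at hσ
        have : σ2 y = Fin.last k := by rw [hσ2]; simp [hy]
        rw [this] at hσ
        exact hcl _ hσ
      have hσy : σ2 y = (σ y.2.2).castSucc := by rw [hσ2]; simp [hy]
      have hσeq : σ x.2.2 = σ y.2.2 := by
        rw [hσx, hσy] at hσ
        exact Fin.castSucc_injective _ hσ
      rw [hσx, hF2c] at hr
      have hside : x.1 = y.1 := hr.elim fun w => dbl_empty_side w
      have hr1 : (F1 (σ x.2.2)).Reachable x.2 y.2 := dbl_reach hr
      have hr0 : (F (σ x.2.2)).Reachable x.2.2 y.2.2 := dbl_reach hr1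
      have h22 : x.2.2 = y.2.2 := htr _ _ hσeq hr0
      have h21 : x.2.1 = y.2.1 := by
        cases hb : x.1 <;> cases hc : x.2.1 <;> cases hd : y.2.1 <;> simp_all
      exact Prod.ext hside (Prod.ext h21 h22)
  



theorem pack_comap (f : α ≃ β) {B : SimpleGraph β} {k : ℕ} (h : Pack B k) :
    Pack (B.comap f) k := by
  obtain ⟨F, hle, hac, hdis, hcov⟩ := h
  refine ⟨fun j => (F j).comap f, fun j u v h => hle j h, ?_, 
    fun j j' u v h h' => hdis j j' _ _ h h', fun u v h => hcov (f u) (f v) h⟩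
  intro j v c hc
  exact hac j (c.map (Hom.comap ⇑f (F j))) ((Walk.map_isCycle_iff_of_injective
    (fun a b hab => f.injective hab)).mpr hc)

theorem gpack_comap (f : α ≃ β) {B : SimpleGraph β} {k : ℕ} (h : GPack B k) :
    GPack (B.comap f) k := by
  obtain ⟨F, σ, hle, hac, hdis, hcov, htr⟩ := h
  refine ⟨fun j => (F j).comap f, fun x => σ (f x), fun j u v h => hle j h, ?_,
    fun j j' u v h h' => hdis j j' _ _ h h', fun u v h => hcov (f u) (f v) h, ?_⟩
  · intro j v c hc
    exact hac j (c.map (Hom.comap ⇑f (F j))) ((Walk.map_isCycle_iff_of_injective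
      (fun a b hab => f.injective hab)).mpr hc)
  · intro x y hσ hr
    exact f.injective (htr (f x) (f y) hσ (hr.map (Hom.comap ⇑f (F (σ (f x))))))

theorem gpack_base : GPack (hypercube 0) 1 := by
  refine ⟨fun _ => ⊥, fun _ => 0, fun j => bot_le, fun j => isAcyclic_bot,
    fun j j' u v h h' => ?_, fun u v h => ?_, fun x y _ hr => reachable_bot.mp hr⟩
  · simp at h
  · obtain ⟨i, -, -⟩ := h
    exact i.elim0

theorem gpack_to_pack {G : SimpleGraph α} {k : ℕ} (h : GPack G k) : Pack G k := by
  obtain ⟨F, σ, hle, hac, hdis, hcov, -⟩ := h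
  exact ⟨F, hle, hac, hdis, hcov⟩

theorem gpack_even : ∀ q : ℕ, GPack (hypercube (2 * q)) (q + 1) := by
  intro q
  induction q with
  | zero => exact gpack_base
  | succ q ih =>
      have h := step_even_abs ih
      have e : 2 * (q + 1) = 2 * q + 2 := by ring
      rw [e, hyp_step2_eq (2 * q)]
      exact gpack_comap _ h

theorem pack_all (n : ℕ) : Pack (hypercube n) (n / 2 + 1) := by
  rcases Nat.even_or_odd n with ⟨q, hq⟩ | ⟨q, hq⟩
  · subst hq
    have e : q + q = 2 * q := by ring
    have e2 : (q + q) / 2 = q := by omega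
    rw [e2, e]
    exact gpack_to_pack (gpack_even q)
  · subst hq
    have e2 : (2 * q + 1) / 2 = q := by omega
    rw [e2, hyp_step_eq (2 * q)]
    exact pack_comap _ (step_odd_abs (gpack_even q))

/- ## counting -/

lemma hyp_adj_iff {n : ℕ} (x y : Fin n → Bool) :
    (hypercube n).Adj x y ↔ ∃ i, y = Function.update x i (!x i) := by
  constructor
  · rintro ⟨i, hi, hu⟩
    refine ⟨i, funext fun j => ?_⟩
    by_cases hj : j = i
    · subst hj
      rw [Function.update_self]
      cases hxj : x j <;> cases hyj : y j <;> simp_all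
    · rw [Function.update_of_ne hj]
      by_contra hne
      exact hj (hu j fun hcon => hne (by rw [hcon]))
  · rintro ⟨i, rfl⟩
    refine ⟨i, ?_, ?_⟩
    · show x i ≠ Function.update x i (!x i) i
      rw [Function.update_self]
      cases x i <;> simp
    · intro j hj
      have hj' : x j ≠ Function.update x i (!x i) j := hj
      by_contra hne
      rw [Function.update_of_ne hne] at hj'
      exact hj' rfl

lemma hyp_degree {n : ℕ} [DecidableRel (hypercube n).Adj] (x : Fin n → Bool) :
    (hypercube n).degree x = n := by
  classical
  have hset : (hypercube n).neighborFinset x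
      = Finset.univ.image (fun i => Function.update x i (!x i)) := by
    ext y
    rw [mem_neighborFinset, hyp_adj_iff]
    simp [eq_comm]
  have hinj : Function.Injective (fun i => Function.update x i (!x i)) := by
    intro i j h
    by_contra hne
    have h2 : Function.update x i (!x i) i = Function.update x j (!x j) i := congrFun h i
    rw [Function.update_of_ne hne] at h2
    simp only [Function.update_self] at h2
    cases x i <;> simp_all
  rw [← card_neighborFinset_eq_degree, hset, Finset.card_image_of_injective _ hinj,
    Finset.card_univ, Fintype.card_fin]

lemma hyp_card_edges (n : ℕ) [DecidableRel (hypercube n).Adj] :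
    2 * (hypercube n).edgeFinset.card = n * 2 ^ n := by
  classical
  have h := SimpleGraph.sum_degrees_eq_twice_card_edges (hypercube n)
  have h2 : ∑ v : Fin n → Bool, (hypercube n).degree v = 2 ^ n * n := by
    rw [Finset.sum_congr rfl (fun v _ => hyp_degree v), Finset.sum_const, Finset.card_univ,
      smul_eq_mul]
    congr 1
    rw [Fintype.card_fun, Fintype.card_bool, Fintype.card_fin]
  rw [h] at h2
  exact h2.trans (Nat.mul_comm _ _)





lemma pack_to_decomp {V' : Type*} {G : SimpleGraph V'} {k : ℕ} (h : Pack G k) :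
    ∃ F : Fin k → SimpleGraph V', (∀ i, F i ≤ G ∧ (F i).IsAcyclic) ∧
      (Pairwise fun i j => Disjoint (F i).edgeSet (F j).edgeSet) ∧
      (⋃ i, (F i).edgeSet) = G.edgeSet := by
  obtain ⟨F, hle, hac, hdis, hcov⟩ := h
  refine ⟨F, fun i => ⟨hle i, hac i⟩, ?_, ?_⟩
  · intro i j hne
    rw [Set.disjoint_left]
    intro e he he'
    induction e using Sym2.ind with
    | _ a b =>
        rw [mem_edgeSet] at he he'
        exact hne (hdis i j _ _ he he')
  · ext e
    simp only [Set.mem_iUnion]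
    induction e using Sym2.ind with
    | _ a b =>
        simp only [mem_edgeSet]
        exact ⟨fun ⟨i, h⟩ => hle i h, fun h => hcov a b h⟩

lemma lower_bound {n t : ℕ} (hn : 1 ≤ n) (F : Fin t → SimpleGraph (Fin n → Bool))
    (hF : ∀ i, F i ≤ hypercube n ∧ (F i).IsAcyclic)
    (hdis : Pairwise fun i j => Disjoint (F i).edgeSet (F j).edgeSet)
    (hcov : (⋃ i, (F i).edgeSet) = (hypercube n).edgeSet) : n / 2 + 1 ≤ t := by
  classical
  letI : DecidableRel (hypercube n).Adj := Classical.decRel _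
  have hVcard : Fintype.card (Fin n → Bool) = 2 ^ n := by
    rw [Fintype.card_fun, Fintype.card_bool, Fintype.card_fin]
  set s : Fin t → Finset (Sym2 (Fin n → Bool)) :=
    fun i => ((F i).edgeSet).toFinite.toFinset with hs
  have hsmem : ∀ i e, e ∈ s i ↔ e ∈ (F i).edgeSet := by
    intro i e
    rw [hs]
    exact Set.Finite.mem_toFinset _
  have hEeq : (hypercube n).edgeFinset = Finset.univ.biUnion s := by
    ext e
    rw [mem_edgeFinset, Finset.mem_biUnion, ← hcov]
    simp only [Set.mem_iUnion]
    constructor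
    · rintro ⟨i, hi⟩
      exact ⟨i, Finset.mem_univ _, (hsmem i e).mpr hi⟩
    · rintro ⟨i, -, hi⟩
      exact ⟨i, (hsmem i e).mp hi⟩
  have hdisF : ∀ i ∈ Finset.univ, ∀ j ∈ Finset.univ, i ≠ j → Disjoint (s i) (s j) := by
    intro i _ j _ hne
    rw [Finset.disjoint_left]
    intro e he he'
    exact (Set.disjoint_left.mp (hdis hne)) ((hsmem i e).mp he) ((hsmem j e).mp he')
  have hcard : (hypercube n).edgeFinset.card = ∑ i, (s i).card := by
    rw [hEeq, Finset.card_biUnion hdisF]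
  have hbound : ∀ i, (s i).card + 1 ≤ 2 ^ n := by
    intro i
    haveI : Fintype ((F i).edgeSet) := Fintype.ofFinite _
    have hb := acyclic_card_le (hF i).2
    rw [hVcard] at hb
    have heq : (F i).edgeFinset = s i := by
      ext e
      rw [mem_edgeFinset, hsmem]
    rwa [heq] at hb
  have hE2 : 2 * (hypercube n).edgeFinset.card = n * 2 ^ n := hyp_card_edges n
  -- arithmetic
  by_contra hcon
  push_neg at hcon
  have ht : t ≤ n / 2 := by omega
  have ht2 : 2 * t ≤ n := by omega
  have hsum : ∑ i, (s i).card ≤ t * (2 ^ n - 1) := by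
    calc ∑ i, (s i).card ≤ ∑ _i : Fin t, (2 ^ n - 1) := by
          refine Finset.sum_le_sum fun i _ => ?_
          have := hbound i
          omega
      _ = t * (2 ^ n - 1) := by
          rw [Finset.sum_const, Finset.card_univ, Fintype.card_fin, smul_eq_mul]
  have hP : 1 ≤ 2 ^ n := Nat.one_le_two_pow
  have key : n * 2 ^ n ≤ 2 * (t * (2 ^ n - 1)) := by omega
  have e1 : t * (2 ^ n - 1) + t = t * 2 ^ n := by
    rw [← Nat.mul_succ]
    congr 1
    omega
  have e2 : 2 * (t * 2 ^ n) = (2 * t) * 2 ^ n := by ring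
  have e3 : (2 * t) * 2 ^ n ≤ n * 2 ^ n := Nat.mul_le_mul_right _ ht2
  -- n * 2^n ≤ 2*(t*(2^n-1)) = 2*(t*2^n) - 2*t ≤ n*2^n - 2*t  ⇒ t = 0
  have ht0 : 1 ≤ t := by
    rcases Nat.eq_zero_or_pos t with rfl | h
    · exfalso
      have : n * 2 ^ n = 0 := by
        have : ∑ i : Fin 0, (s i).card = 0 := rfl
        omega
      have : ¬ (n * 2 ^ n = 0) := by positivity
      omega
    · exact h
  omega

end ArbAux


/-- The arboricity of the hypercube `Q_n` equals `⌊n/2⌋ + 1`. -/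
theorem arboricity_hypercube (n : ℕ) (hn : 1 ≤ n) :
    arboricity (hypercube n) = n / 2 + 1 := by
  classical
  have hmem : (n / 2 + 1) ∈ {t | ∃ F : Fin t → SimpleGraph (Fin n → Bool),
      (∀ i, F i ≤ hypercube n ∧ (F i).IsAcyclic) ∧
      (Pairwise fun i j => Disjoint (F i).edgeSet (F j).edgeSet) ∧
      (⋃ i, (F i).edgeSet) = (hypercube n).edgeSet} := by
    obtain ⟨F, h1, h2, h3⟩ := ArbAux.pack_to_decomp (ArbAux.pack_all n)
    exact ⟨F, h1, h2, h3⟩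
  have hne : Set.Nonempty _ := ⟨_, hmem⟩
  have hmin := Nat.sInf_mem hne
  obtain ⟨F, hF, hdis, hcov⟩ := hmin
  exact le_antisymm (Nat.sInf_le hmem) (ArbAux.lower_bound hn F hF hdis hcov)
end
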